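/- arXiv:2301.01985 — 12 statements merged into one kernel-verified Lean document; each statement's English description precedes it below -/
import Mathlib

section
/- Let K be a field of characteristic 0, let F : ℕ → K be a sequence, and let a_0, …, a_J ∈ K[k] with a_J ≠ 0 be polynomials such that ∑_{i=0}^{J} a_i(k) F(k+i) = 0 for every k ∈ ℕ. For a polynomial x ∈ K[k] define u_i(k) = ∑_{j=1}^{J-i} a_{i+j}(k-j) x(k-j) for i = 0, 1, …, J-1 (polynomial evaluation at the integer k-j). Then for every x ∈ K[k] and every k ∈ ℕ one has the telescoping identity (∑_{i=0}^{J} a_i(k-i) x(k-i)) · F(k) = (∑_{i=0}^{J-1} u_i(k) F(k+i)) − (∑_{i=0}^{J-1} u_i(k+1) F(k+1+i)). -/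
open Polynomial Finset

theorem telescoping_identity {K : Type*} [Field K] [CharZero K]
    (J : ℕ) (a : ℕ → Polynomial K) (hJ : a J ≠ 0)
    (F : ℕ → K)
    (hann : ∀ k : ℕ, ∑ i ∈ Finset.range (J + 1), (a i).eval (k : K) * F (k + i) = 0)
    (x : Polynomial K) (k : ℕ) :
    (∑ i ∈ Finset.range (J + 1), (a i).eval ((k : K) - i) * x.eval ((k : K) - i)) * F k
      = (∑ i ∈ Finset.range J,
          (∑ j ∈ Finset.Icc 1 (J - i),
            (a (i + j)).eval ((k : K) - j) * x.eval ((k : K) - j)) * F (k + i))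
        - (∑ i ∈ Finset.range J,
          (∑ j ∈ Finset.Icc 1 (J - i),
            (a (i + j)).eval (((k : K) + 1) - j) * x.eval (((k : K) + 1) - j)) * F (k + 1 + i)) := by
  obtain ⟨v, hv⟩ : ∃ v : ℕ → K, ∀ i, v i = ∑ j ∈ Finset.Icc 1 (J - i),
      (a (i + j)).eval ((k : K) - j) * x.eval ((k : K) - j) := ⟨_, fun _ => rfl⟩
  obtain ⟨w, hw⟩ : ∃ w : ℕ → K, ∀ i, w i = ∑ j ∈ Finset.Icc 1 (J - i),
      (a (i + j)).eval (((k : K) + 1) - j) * x.eval (((k : K) + 1) - j) := ⟨_, fun _ => rfl⟩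
  simp only [← hv, ← hw]
  -- rewrite v as a range sum
  have hvr : ∀ i, v i = ∑ j ∈ Finset.range (J - i),
      (a (i + 1 + j)).eval ((k : K) - (1 + j)) * x.eval ((k : K) - (1 + j)) := by
    intro i
    rw [hv]
    rw [← Finset.Ico_add_one_right_eq_Icc, Finset.sum_Ico_eq_sum_range]
    apply Finset.sum_congr rfl
    intro j _
    have h1 : i + (1 + j) = i + 1 + j := by omega
    have h2 : ((1 + j : ℕ) : K) = 1 + (j : K) := by push_cast; ring
    rw [h1, h2]
  have hvJ : v J = 0 := by
    rw [hv]; simp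
  -- key step relation
  have hws : ∀ i, i < J → w i = (a (i + 1)).eval (k : K) * x.eval (k : K) + v (i + 1) := by
    intro i hi
    rw [hw]
    rw [← Finset.Ico_add_one_right_eq_Icc, Finset.sum_Ico_eq_sum_range]
    have h1 : J - i + 1 - 1 = (J - (i + 1)) + 1 := by omega
    rw [h1, Finset.sum_range_succ']
    rw [hvr (i + 1)]
    have h0 : (a (i + (1 + 0))).eval ((k : K) + 1 - ((1 + 0 : ℕ) : K)) *
        x.eval ((k : K) + 1 - ((1 + 0 : ℕ) : K))
        = (a (i + 1)).eval (k : K) * x.eval (k : K) := by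
      norm_num
    rw [h0, add_comm]
    congr 1
    apply Finset.sum_congr rfl
    intro j _
    have hi1 : i + (1 + (j + 1)) = i + 1 + 1 + j := by omega
    have hc : ((1 + (j + 1) : ℕ) : K) = 1 + ((j : K) + 1) := by push_cast; ring
    rw [hi1, hc]
    have he : (k : K) + 1 - (1 + ((j : K) + 1)) = (k : K) - (1 + j) := by ring
    rw [he]
  -- the annihilation consequence
  have hann2 : ∑ i ∈ Finset.range J, (a (i + 1)).eval (k : K) * F (k + 1 + i)
      = - ((a 0).eval (k : K) * F k) := by
    have h := hann k
    rw [Finset.sum_range_succ'] at h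
    simp only [Nat.add_zero] at h
    have h3 : ∑ i ∈ Finset.range J, (a (i + 1)).eval (k : K) * F (k + (i + 1))
        = ∑ i ∈ Finset.range J, (a (i + 1)).eval (k : K) * F (k + 1 + i) := by
      apply Finset.sum_congr rfl
      intro i _
      congr 2
      omega
    rw [h3] at h
    linear_combination h
  -- shifted v-sum
  have hvs : ∑ i ∈ Finset.range J, v (i + 1) * F (k + 1 + i)
      = (∑ i ∈ Finset.range J, v i * F (k + i)) - v 0 * F k := by
    have h1 : ∑ i ∈ Finset.range (J + 1), v i * F (k + i)
        = (∑ i ∈ Finset.range J, v (i + 1) * F (k + (i + 1))) + v 0 * F (k + 0) := by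
      rw [Finset.sum_range_succ']
    have h2 : ∑ i ∈ Finset.range (J + 1), v i * F (k + i)
        = (∑ i ∈ Finset.range J, v i * F (k + i)) + v J * F (k + J) := by
      rw [Finset.sum_range_succ]
    have h3 : ∑ i ∈ Finset.range J, v (i + 1) * F (k + (i + 1))
        = ∑ i ∈ Finset.range J, v (i + 1) * F (k + 1 + i) := by
      apply Finset.sum_congr rfl; intro i _; congr 2; omega
    rw [hvJ, zero_mul, add_zero] at h2
    simp only [Nat.add_zero] at h1
    rw [h3] at h1
    linear_combination h2 - h1
  -- compute B
  have hB : ∑ i ∈ Finset.range J, w i * F (k + 1 + i)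
      = x.eval (k : K) * (- ((a 0).eval (k : K) * F k))
        + ((∑ i ∈ Finset.range J, v i * F (k + i)) - v 0 * F k) := by
    have hsplit : ∑ i ∈ Finset.range J, w i * F (k + 1 + i)
        = ∑ i ∈ Finset.range J,
            ((a (i + 1)).eval (k : K) * x.eval (k : K) * F (k + 1 + i)
              + v (i + 1) * F (k + 1 + i)) := by
      apply Finset.sum_congr rfl
      intro i hi
      rw [hws i (Finset.mem_range.mp hi)]
      ring
    rw [hsplit, Finset.sum_add_distrib, hvs]
    congr 1
    rw [← hann2, Finset.mul_sum]
    apply Finset.sum_congr rfl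
    intro i _
    ring
  -- LHS decomposition
  have hLHS : ∑ i ∈ Finset.range (J + 1), (a i).eval ((k : K) - i) * x.eval ((k : K) - i)
      = v 0 + (a 0).eval (k : K) * x.eval (k : K) := by
    rw [Finset.sum_range_succ', hvr 0]
    norm_num
    apply Finset.sum_congr rfl
    intro i _
    have h1 : 1 + i = i + 1 := by omega
    have h2 : (k : K) - (1 + (i : K)) = (k : K) - ((i : K) + 1) := by ring
    rw [h1, h2]
  rw [hB, hLHS]
  ring
end

section
/- Let K be a field of characteristic 0 and let L = ∑_{i=0}^{J} a_i(k) σ^i with a_i ∈ K[k], a_J ≠ 0, and d = deg(L) ≥ 0. Suppose L is nondegenerated (R_L = ∅) and there exists γ ∈ K such that, as polynomial identities in k, a_i(γ+k) = (−1)^d · a_{J−i}(γ−k−J) for all i = 0, 1, …, ⌊J/2⌋. Then for every positive integer m, the polynomial (k−γ)^m lies in the sum of the difference space S_L and the K-linear span of the polynomials (k−γ)^i with 0 ≤ i < d and i ≡ m (mod 2). -/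
set_option maxRecDepth 8000

open Polynomial Finset

section Aux

variable {K : Type*} [Field K] [CharZero K]

noncomputable def Dop (K : Type*) [CommRing K] : Module.End K (Polynomial K) :=
  (Polynomial.taylor 1 : Polynomial K →ₗ[K] Polynomial K) - 1

omit [CharZero K] in
lemma Dop_apply (p : Polynomial K) : Dop K p = taylor 1 p - p := rfl

lemma taylor_pow_apply (j : ℕ) (p : Polynomial K) :
    ((taylor (1:K) : Module.End K (Polynomial K)) ^ j) p = taylor (j : K) p := by
  induction j generalizing p with
  | zero => simp
  | succ n ih =>
      rw [pow_succ, Module.End.mul_apply, ih, taylor_taylor]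
      norm_num

lemma taylor_nat_eq_sum (j : ℕ) (p : Polynomial K) :
    taylor (j : K) p = ∑ ℓ ∈ range (j + 1), (j.choose ℓ : K) • (Dop K ^ ℓ) p := by
  have hS : (taylor (1:K) : Module.End K (Polynomial K)) = Dop K + 1 := by
    simp [Dop]
  have hcomm : Commute (Dop K) (1 : Module.End K (Polynomial K)) := Commute.one_right _
  have := hcomm.add_pow j
  rw [← taylor_pow_apply, hS, this]
  simp only [one_pow, mul_one, LinearMap.coe_sum, Finset.sum_apply]
  refine Finset.sum_congr rfl fun ℓ _ => ?_
  rw [Module.End.mul_apply, Module.End.natCast_apply, map_nsmul, ← Nat.cast_smul_eq_nsmul K]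

omit [CharZero K] in
lemma degree_taylor' (r : K) (p : Polynomial K) : (taylor r p).degree = p.degree := by
  rcases eq_or_ne p 0 with h | h
  · simp [h]
  · have h2 : taylor r p ≠ 0 := fun hc => h (taylor_injective r (by simp [hc]))
    rw [degree_eq_natDegree h, degree_eq_natDegree h2, natDegree_taylor]

omit [CharZero K] in
lemma hasseDeriv_eq_C_of_degree_le {q : Polynomial K} {n : ℕ} (h : q.degree ≤ (n : ℕ)) :
    hasseDeriv n q = C (q.coeff n) := by
  ext m
  rw [hasseDeriv_coeff]
  rcases Nat.eq_zero_or_pos m with hm | hm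
  · subst hm; simp
  · have : q.coeff (m + n) = 0 := by
      apply coeff_eq_zero_of_degree_lt
      calc q.degree ≤ (n : WithBot ℕ) := h
      _ < ((m + n : ℕ) : WithBot ℕ) := by exact_mod_cast by omega
    rw [this, mul_zero, coeff_C, if_neg (by omega)]

omit [CharZero K] in
lemma taylor_coeff_of_degree_le {q : Polynomial K} {n : ℕ} (r : K) (h : q.degree ≤ (n : ℕ)) :
    (taylor r q).coeff n = q.coeff n := by
  rw [taylor_coeff, hasseDeriv_eq_C_of_degree_le h, eval_C]

omit [CharZero K] in
lemma hasseDeriv_eq_of_degree_le {q : Polynomial K} {s : ℕ}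
    (h : q.degree ≤ ((s+1 : ℕ) : WithBot ℕ)) :
    hasseDeriv s q = C (q.coeff s) + C (((s:K)+1) * q.coeff (s+1)) * X := by
  ext m
  rw [hasseDeriv_coeff]
  match m with
  | 0 => simp
  | 1 =>
      simp only [coeff_add, coeff_C, if_neg (by omega : ¬(1:ℕ) = 0), coeff_C_mul, coeff_X_one,
        mul_one, zero_add]
      rw [Nat.add_comm 1 s, Nat.choose_succ_self_right]
      push_cast; ring
  | (m+2) =>
      have : q.coeff (m + 2 + s) = 0 := by
        apply coeff_eq_zero_of_degree_lt
        calc q.degree ≤ ((s+1 : ℕ) : WithBot ℕ) := h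
        _ < ((m + 2 + s : ℕ) : WithBot ℕ) := by exact_mod_cast by omega
      rw [this, mul_zero]
      simp [coeff_C, coeff_one]

omit [CharZero K] in
lemma Dop_degree_coeff {p : Polynomial K} {s : ℕ} (h : p.degree ≤ ((s+1 : ℕ) : WithBot ℕ)) :
    (Dop K p).degree ≤ (s : ℕ) ∧ (Dop K p).coeff s = ((s:K)+1) * p.coeff (s+1) := by
  constructor
  · rw [degree_le_iff_coeff_zero]
    intro m hm
    have hm' : ((s+1 : ℕ) : WithBot ℕ) ≤ m := by
      rcases m with _ | m
      · simp at hm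
      · exact_mod_cast by exact_mod_cast Nat.succ_le_of_lt (by exact_mod_cast hm)
    rw [Dop_apply, coeff_sub, taylor_coeff_of_degree_le 1 (le_trans h hm'), sub_self]
  · rw [Dop_apply, coeff_sub, taylor_coeff, hasseDeriv_eq_of_degree_le h]
    simp [eval_C]

omit [CharZero K] in
lemma Dop_zero_of_degree_le_zero {p : Polynomial K} (h : p.degree ≤ 0) : Dop K p = 0 := by
  have hp := degree_le_zero_iff.mp h
  rw [Dop_apply, hp, taylor_C, sub_self]

omit [CharZero K] in
lemma Dop_pow_degree (ℓ : ℕ) (p : Polynomial K) (s : ℕ) (h : p.degree ≤ (s : ℕ)) :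
    ((Dop K ^ ℓ) p).degree + (ℓ : WithBot ℕ) ≤ (s : ℕ) := by
  induction ℓ generalizing p s with
  | zero => simpa using h
  | succ n ih =>
      rw [pow_succ, Module.End.mul_apply]
      match s, h with
      | 0, h =>
        rw [Dop_zero_of_degree_le_zero (by simpa using h), map_zero]
        simp
      | (t+1), h =>
        have h1 := (Dop_degree_coeff (p := p) (s := t) (by exact_mod_cast h)).1
        have h2 := ih (Dop K p) t h1
        calc ((Dop K ^ n) (Dop K p)).degree + ((n+1:ℕ) : WithBot ℕ)
            = (((Dop K ^ n) (Dop K p)).degree + (n : WithBot ℕ)) + 1 := by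
              push_cast; rw [add_assoc]
          _ ≤ (t : WithBot ℕ) + 1 := add_le_add_left h2 1
          _ = ((t+1 : ℕ) : WithBot ℕ) := by push_cast; rfl

omit [CharZero K] in
lemma Dop_pow_coeff (ℓ : ℕ) (p : Polynomial K) (s : ℕ) (hls : ℓ ≤ s) (h : p.degree ≤ (s : ℕ)) :
    ((Dop K ^ ℓ) p).coeff (s - ℓ) = (s.descFactorial ℓ : K) * p.coeff s := by
  induction ℓ generalizing p s with
  | zero => simp
  | succ n ih =>
      rw [pow_succ, Module.End.mul_apply]
      match s, hls, h with
      | (t+1), hls, h =>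
        have hd := Dop_degree_coeff (p := p) (s := t) (by exact_mod_cast h)
        have := ih (Dop K p) t (by omega) hd.1
        rw [show t + 1 - (n + 1) = t - n from by omega, this, hd.2,
          Nat.succ_descFactorial_succ]
        push_cast; ring

omit [CharZero K] in
lemma Dop_pow_zero_of_lt (ℓ : ℕ) (p : Polynomial K) (s : ℕ) (hls : s < ℓ)
    (h : p.degree ≤ (s : ℕ)) : (Dop K ^ ℓ) p = 0 := by
  have h1 := Dop_pow_degree ℓ p s h
  by_contra hne
  rw [degree_eq_natDegree hne] at h1
  have h2 : ((Dop K ^ ℓ) p).natDegree + ℓ ≤ s := by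
    simp only [Nat.cast_withBot] at h1
    rw [← WithBot.coe_add] at h1
    exact WithBot.coe_le_coe.mp h1
  omega

lemma degree_le_sub_of_add_le {A : WithBot ℕ} {ℓ s : ℕ} (hls : ℓ ≤ s)
    (h : A + (ℓ : WithBot ℕ) ≤ (s : ℕ)) : A ≤ ((s - ℓ : ℕ) : WithBot ℕ) := by
  induction A using WithBot.recBotCoe with
  | bot => exact bot_le
  | coe k =>
      simp only [Nat.cast_withBot] at h ⊢
      rw [← WithBot.coe_add] at h
      have h2 := WithBot.coe_le_coe.mp h
      exact WithBot.coe_le_coe.mpr (by omega)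

omit [CharZero K] in
lemma coeff_mul_of_degree_le {p q : Polynomial K} {m n : ℕ}
    (hp : p.degree ≤ (m : ℕ)) (hq : q.degree ≤ (n : ℕ)) :
    (p * q).coeff (m + n) = p.coeff m * q.coeff n := by
  rw [coeff_mul]
  apply Finset.sum_eq_single (m, n)
  · rintro ⟨i, j⟩ hij hne
    rw [Finset.HasAntidiagonal.mem_antidiagonal] at hij
    have : m < i ∨ n < j := by
      by_contra hc
      push_neg at hc
      exact hne (by simp at hij ⊢; omega)
    rcases this with h | h
    · rw [coeff_eq_zero_of_degree_lt (lt_of_le_of_lt hp (by exact_mod_cast h)), zero_mul]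
    · rw [coeff_eq_zero_of_degree_lt (lt_of_le_of_lt hq (by exact_mod_cast h)), mul_zero]
  · intro h
    simp [Finset.mem_antidiagonal] at h

omit [CharZero K] in
lemma coeff_comp_neg_X (p : Polynomial K) (n : ℕ) :
    (p.comp (-X)).coeff n = (-1)^n * p.coeff n := by
  induction p using Polynomial.induction_on' with
  | add p q hp hq => simp [add_comp, hp, hq, mul_add]
  | monomial k c =>
      rw [monomial_comp, coeff_monomial]
      have hx : (-X : Polynomial K)^k = C ((-1)^k) * X^k := by
        rw [neg_pow]
        simp [← C_pow, ← C_neg]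
      rw [hx, mul_left_comm, coeff_C_mul, coeff_C_mul, coeff_X_pow]
      rcases eq_or_ne k n with rfl | hne
      · simp
      · rw [if_neg (fun hc => hne hc.symm), if_neg hne]
        ring

omit [CharZero K] in
lemma degree_lt_of_coeff_zero {q : Polynomial K} {n : ℕ} (h1 : q.degree ≤ (n : ℕ))
    (h2 : q.coeff n = 0) : q.degree < (n : ℕ) := by
  rcases lt_or_eq_of_le h1 with h | h
  · exact h
  · exfalso
    have hq : q ≠ 0 := fun hc => by simp [hc] at h
    have := natDegree_eq_of_degree_eq_some h
    exact leadingCoeff_ne_zero.mpr hq (by rwa [leadingCoeff, this])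

lemma Lstar_eq (J : ℕ) (a : ℕ → Polynomial K) (b : ℕ → Polynomial K)
    (hb : ∀ ℓ, b ℓ = ∑ j ∈ Finset.Icc ℓ J,
      (j.choose ℓ : K) • ((a (J - j)).comp (Polynomial.X + Polynomial.C ((j : K) - (J : K)))))
    (Lstar : Polynomial K → Polynomial K)
    (hLstar : ∀ x : Polynomial K, Lstar x = ∑ i ∈ Finset.range (J + 1),
      ((a i).comp (Polynomial.X - (i : Polynomial K))) *
        (x.comp (Polynomial.X - (i : Polynomial K))))
    (x : Polynomial K) :
    Lstar x = ∑ ℓ ∈ range (J + 1), b ℓ * ((Dop K ^ ℓ) x).comp (X - (J : Polynomial K)) := by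
  rw [hLstar, ← Finset.sum_range_reflect]
  have key : ∀ j ∈ range (J + 1),
      (a (J + 1 - 1 - j)).comp (X - ((J + 1 - 1 - j : ℕ) : Polynomial K)) *
        (x.comp (X - ((J + 1 - 1 - j : ℕ) : Polynomial K)))
      = ∑ ℓ ∈ range (j + 1), (j.choose ℓ : K) •
          ((a (J - j)).comp (X + C ((j : K) - (J : K))) *
            ((Dop K ^ ℓ) x).comp (X - (J : Polynomial K))) := by
    intro j hj
    rw [mem_range] at hj
    have hjJ : j ≤ J := by omega
    have hidx : J + 1 - 1 - j = J - j := by omega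
    rw [hidx]
    have harg : (X - ((J - j : ℕ) : Polynomial K)) = X + C ((j : K) - (J : K)) := by
      rw [← C_eq_natCast, Nat.cast_sub hjJ, sub_eq_add_neg, ← C_neg]
      congr 1
      ring
    rw [harg]
    have hx2 : x.comp (X + C ((j : K) - (J : K)))
        = (taylor (j : K) x).comp (X - (J : Polynomial K)) := by
      rw [taylor_apply, comp_assoc, add_comp, X_comp, C_comp]
      congr 1
      rw [← C_eq_natCast, C_sub]
      ring
    rw [hx2, taylor_nat_eq_sum, Polynomial.sum_comp, Finset.mul_sum]
    refine Finset.sum_congr rfl fun ℓ _ => ?_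
    rw [smul_comp, mul_smul_comm]
  rw [Finset.sum_congr rfl key]
  rw [Finset.sum_comm' (t' := range (J + 1)) (s' := fun ℓ => Finset.Icc ℓ J)
    (by intro j ℓ; simp only [mem_range, mem_Icc]; omega)]
  refine Finset.sum_congr rfl fun ℓ _ => ?_
  rw [hb, Finset.sum_mul]
  refine Finset.sum_congr rfl fun j _ => ?_
  rw [smul_mul_assoc]

omit [CharZero K] in
lemma comp_X_sub_natCast (p : Polynomial K) (J : ℕ) :
    p.comp (X - (J : Polynomial K)) = taylor (-(J:K)) p := by
  rw [taylor_apply, ← C_eq_natCast, C_neg, sub_eq_add_neg]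

lemma LemmaA (J : ℕ) (b : ℕ → Polynomial K) (d : ℕ)
    (hd_le : ∀ ℓ ∈ Finset.range (J + 1), (b ℓ).degree ≤ ((d + ℓ : ℕ) : WithBot ℕ))
    (f : ℕ → K)
    (hf : ∀ s : ℕ, f s = ∑ ℓ ∈ Finset.range (J + 1),
      (b ℓ).coeff (d + ℓ) * (s.descFactorial ℓ : K))
    (Lstar : Polynomial K → Polynomial K)
    (hLs : ∀ x, Lstar x = ∑ ℓ ∈ range (J + 1),
      b ℓ * ((Dop K ^ ℓ) x).comp (X - (J : Polynomial K)))
    (x : Polynomial K) (s : ℕ) (hx : x.degree ≤ (s : ℕ)) :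
    (Lstar x).degree ≤ ((s + d : ℕ) : WithBot ℕ) ∧ (Lstar x).coeff (s + d) = f s * x.coeff s := by
  have hterm_deg : ∀ ℓ ∈ range (J + 1),
      (b ℓ * ((Dop K ^ ℓ) x).comp (X - (J : Polynomial K))).degree
        ≤ ((s + d : ℕ) : WithBot ℕ) := by
    intro ℓ hℓ
    rcases le_or_gt ℓ s with hls | hls
    · have h1 := Dop_pow_degree ℓ x s hx
      have h2 : ((Dop K ^ ℓ) x).degree ≤ ((s - ℓ : ℕ) : WithBot ℕ) :=
        degree_le_sub_of_add_le hls h1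
      calc (b ℓ * ((Dop K ^ ℓ) x).comp (X - (J : Polynomial K))).degree
          ≤ (b ℓ).degree + (((Dop K ^ ℓ) x).comp (X - (J : Polynomial K))).degree :=
            degree_mul_le _ _
        _ ≤ ((d + ℓ : ℕ) : WithBot ℕ) + ((s - ℓ : ℕ) : WithBot ℕ) := by
            rw [comp_X_sub_natCast, degree_taylor']
            exact add_le_add (hd_le ℓ hℓ) h2
        _ = ((s + d : ℕ) : WithBot ℕ) := by
            rw [← Nat.cast_add]
            congr 1
            omega
    · rw [Dop_pow_zero_of_lt ℓ x s hls hx]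
      simp
  constructor
  · rw [hLs]
    exact le_trans (degree_sum_le _ _) (by
      rw [Finset.sup_le_iff]
      intro ℓ hℓ
      exact hterm_deg ℓ hℓ)
  · rw [hLs, finset_sum_coeff, hf, Finset.sum_mul]
    refine Finset.sum_congr rfl fun ℓ hℓ => ?_
    rcases le_or_gt ℓ s with hls | hls
    · have h1 := Dop_pow_degree ℓ x s hx
      have h2 : ((Dop K ^ ℓ) x).degree ≤ ((s - ℓ : ℕ) : WithBot ℕ) :=
        degree_le_sub_of_add_le hls h1
      have h3 : (((Dop K ^ ℓ) x).comp (X - (J : Polynomial K))).degree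
          ≤ ((s - ℓ : ℕ) : WithBot ℕ) := by
        rw [comp_X_sub_natCast, degree_taylor']; exact h2
      have h4 : s + d = (d + ℓ) + (s - ℓ) := by omega
      rw [h4, coeff_mul_of_degree_le (hd_le ℓ hℓ) h3, comp_X_sub_natCast,
        taylor_coeff_of_degree_le _ h2, Dop_pow_coeff ℓ x s hls hx]
      ring
    · rw [Dop_pow_zero_of_lt ℓ x s hls hx]
      rw [Nat.descFactorial_eq_zero_iff_lt.mpr hls]
      simp

omit [CharZero K] in
lemma Lstar_add_smul (J : ℕ) (a : ℕ → Polynomial K)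
    (Lstar : Polynomial K → Polynomial K)
    (hLstar : ∀ x : Polynomial K, Lstar x = ∑ i ∈ Finset.range (J + 1),
      ((a i).comp (Polynomial.X - (i : Polynomial K))) *
        (x.comp (Polynomial.X - (i : Polynomial K))))
    (c : K) (y x' : Polynomial K) :
    Lstar (C c * y + x') = C c * Lstar y + Lstar x' := by
  simp only [hLstar, add_comp, mul_comp, C_comp, Finset.mul_sum, ← Finset.sum_add_distrib]
  refine Finset.sum_congr rfl fun i _ => ?_
  ring

omit [CharZero K] in
lemma hsym_all (J d : ℕ) (a : ℕ → Polynomial K) (γ : K)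
    (hsym : ∀ i ≤ J / 2,
      (a i).comp (Polynomial.C γ + Polynomial.X)
        = (-1 : Polynomial K) ^ d *
          ((a (J - i)).comp (Polynomial.C γ - Polynomial.X - (J : Polynomial K)))) :
    ∀ i ≤ J,
      (a i).comp (Polynomial.C γ + Polynomial.X)
        = (-1 : Polynomial K) ^ d *
          ((a (J - i)).comp (Polynomial.C γ - Polynomial.X - (J : Polynomial K))) := by
  intro i hi
  rcases le_or_gt i (J / 2) with h | h
  · exact hsym i h
  · have hJi : J - i ≤ J / 2 := by omega
    have h2 := hsym (J - i) hJi
    rw [Nat.sub_sub_self hi] at h2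
    have h3 := congrArg (fun p => p.comp (-X - (J : Polynomial K))) h2
    simp only [comp_assoc, mul_comp, pow_comp, neg_comp, one_comp] at h3
    have e1 : ((C γ + X : Polynomial K)).comp (-X - (J : Polynomial K))
        = C γ - X - (J : Polynomial K) := by
      simp only [add_comp, C_comp, X_comp]; ring
    have e2 : ((C γ - X - (J : Polynomial K) : Polynomial K)).comp (-X - (J : Polynomial K))
        = C γ + X := by
      simp only [sub_comp, C_comp, X_comp, natCast_comp]; ring
    rw [e1, e2] at h3
    rw [h3, ← mul_assoc, ← pow_add, Even.neg_one_pow ⟨d, by ring⟩, one_mul]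

omit [CharZero K] in
lemma LSym (J d : ℕ) (a : ℕ → Polynomial K) (γ : K)
    (hsa : ∀ i ≤ J,
      (a i).comp (Polynomial.C γ + Polynomial.X)
        = (-1 : Polynomial K) ^ d *
          ((a (J - i)).comp (Polynomial.C γ - Polynomial.X - (J : Polynomial K)))) :
    ∀ (Lstar : Polynomial K → Polynomial K),
    (∀ x : Polynomial K, Lstar x = ∑ i ∈ Finset.range (J + 1),
      ((a i).comp (Polynomial.X - (i : Polynomial K))) *
        (x.comp (Polynomial.X - (i : Polynomial K)))) →
    ∀ x : Polynomial K,
    Lstar (x.comp (C (2*γ) - (J : Polynomial K) - X))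
      = (-1 : Polynomial K) ^ d * (Lstar x).comp (C (2*γ) - X) := by
  intro Lstar hLstar x
  rw [hLstar x, hLstar (x.comp _), Polynomial.sum_comp, Finset.mul_sum,
    ← Finset.sum_range_reflect]
  refine Finset.sum_congr rfl fun i hi => ?_
  rw [mem_range] at hi
  have hiJ : i ≤ J := by omega
  have hidx : J + 1 - 1 - i = J - i := by omega
  rw [hidx, mul_comp, comp_assoc, comp_assoc, comp_assoc]
  have harg : (C (2*γ) - (J : Polynomial K) - X).comp (X - ((J - i : ℕ) : Polynomial K))
      = (X - (i : Polynomial K)).comp (C (2*γ) - X) := by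
    simp only [sub_comp, X_comp, C_comp, natCast_comp, ← C_eq_natCast, Nat.cast_sub hiJ, C_sub]
    ring
  rw [harg]
  have hcoeff : (a (J - i)).comp (X - ((J - i : ℕ) : Polynomial K))
      = (-1 : Polynomial K) ^ d * (a i).comp ((X - (i : Polynomial K)).comp (C (2*γ) - X)) := by
    have h3 := congrArg
      (fun p => p.comp (X - C γ - ((J - i : ℕ) : Polynomial K))) (hsa (J - i) (by omega))
    rw [Nat.sub_sub_self hiJ] at h3
    simp only [comp_assoc, mul_comp, pow_comp, neg_comp, one_comp] at h3
    have e1 : ((C γ + X : Polynomial K)).comp (X - C γ - ((J - i : ℕ) : Polynomial K))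
        = X - ((J - i : ℕ) : Polynomial K) := by
      simp only [add_comp, C_comp, X_comp]; ring
    have e2 : ((C γ - X - (J : Polynomial K) : Polynomial K)).comp
          (X - C γ - ((J - i : ℕ) : Polynomial K))
        = (X - (i : Polynomial K)).comp (C (2*γ) - X) := by
      simp only [sub_comp, C_comp, X_comp, natCast_comp, ← C_eq_natCast, Nat.cast_sub hiJ, C_sub,
        C_mul, C_add]
      have : (C 2 : Polynomial K) * C γ = C γ + C γ := by rw [← C_add, ← C_mul]; congr 1; ring
      rw [this]
      ring
    rw [e1, e2] at h3
    exact h3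
  rw [hcoeff]
  ring

lemma parity_of_neg_one_pow_eq {n m : ℕ} (h : ((-1:K))^n = (-1)^m) : n % 2 = m % 2 := by
  have h2 : ∀ k : ℕ, ((-1:K))^k = (-1)^(k%2) := fun k => by
    conv_lhs => rw [← Nat.div_add_mod k 2]
    rw [pow_add, pow_mul]
    norm_num
  rw [h2 n, h2 m] at h
  rcases Nat.mod_two_eq_zero_or_one n with h1 | h1 <;>
    rcases Nat.mod_two_eq_zero_or_one m with h3 | h3 <;> rw [h1, h3] at h ⊢
  all_goals try rfl
  all_goals simp only [pow_zero, pow_one] at h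
  all_goals exfalso
  · exact (by norm_num : (2:K) ≠ 0) (by linear_combination h)
  · exact (by norm_num : (2:K) ≠ 0) (by linear_combination -h)

omit [CharZero K] in
lemma comp_C_sub_X_coeff (p : Polynomial K) (c : K) (n : ℕ) (h : p.degree ≤ (n:ℕ)) :
    (p.comp (C c - X)).coeff n = (-1)^n * p.coeff n := by
  have hcomp : p.comp (C c - X) = (p.comp (-X)).comp (X - C c) := by
    rw [comp_assoc]
    congr 1
    rw [neg_comp, X_comp]
    ring
  have hdegneg : (p.comp (-X)).degree ≤ (n : ℕ) := by
    rw [degree_le_iff_coeff_zero] at h ⊢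
    intro k hk
    rw [coeff_comp_neg_X, h k hk, mul_zero]
  rw [hcomp, show (X : Polynomial K) - C c = X + C (-c) by rw [C_neg]; ring, ← taylor_apply,
    taylor_coeff_of_degree_le _ hdegneg, coeff_comp_neg_X]

lemma low_deg_mem (γ : K) (d m : ℕ) (p : Polynomial K) (hdeg : p.degree < (d:ℕ))
    (hT : p.comp (C (2*γ) - X) = C ((-1:K)^m) * p) :
    p ∈ Submodule.span K ((fun i : ℕ => (X - C γ)^i) '' {i : ℕ | i < d ∧ i % 2 = m % 2}) := by
  rcases eq_or_ne p 0 with rfl | hp0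
  · exact Submodule.zero_mem _
  set q := taylor γ p with hqdef
  have hq : q.comp (X - C γ) = p := by
    rw [hqdef, taylor_apply, comp_assoc, add_comp, X_comp, C_comp, sub_add_cancel, comp_X]
  have hq0 : q ≠ 0 := fun hc => hp0 (by rw [← hq, hc, zero_comp])
  have hqdeg : q.degree < (d : ℕ) := by rwa [hqdef, degree_taylor']
  have hqneg : q.comp (-X) = C ((-1:K)^m) * q := by
    have h1 : q.comp (C γ - X) = C ((-1:K)^m) * p := by
      have hT2 := hT
      rw [← hq, comp_assoc, sub_comp, X_comp, C_comp] at hT2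
      rw [show (C (2*γ) : Polynomial K) - X - C γ = C γ - X from by
        rw [show (C (2*γ) : Polynomial K) = C γ + C γ from by rw [← C_add]; congr 1; ring]
        ring, hq] at hT2
      exact hT2
    have h2 := congrArg (fun r => r.comp (X + C γ)) h1
    simp only [comp_assoc, sub_comp, add_comp, X_comp, C_comp, mul_comp] at h2
    rw [show (C γ - (X + C γ) : Polynomial K) = -X by ring] at h2
    rw [h2, hqdef, ← taylor_apply]
  have hcoeffpar : ∀ i, q.coeff i ≠ 0 → i % 2 = m % 2 := by
    intro i hi
    have := congrArg (fun r => r.coeff i) hqneg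
    simp only [coeff_comp_neg_X, coeff_C_mul] at this
    exact parity_of_neg_one_pow_eq (mul_right_cancel₀ hi this)
  rw [← hq, comp_eq_sum_left, Polynomial.sum_def]
  apply Submodule.sum_mem
  intro i hi
  rw [mem_support_iff] at hi
  rw [← smul_eq_C_mul]
  apply Submodule.smul_mem
  apply Submodule.subset_span
  refine ⟨i, ⟨?_, hcoeffpar i hi⟩, rfl⟩
  have hle : (i : WithBot ℕ) ≤ q.degree := le_degree_of_ne_zero hi
  have := lt_of_le_of_lt hle hqdeg
  exact_mod_cast this

end Aux

theorem power_partible_reduction {K : Type*} [Field K] [CharZero K]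
    (J : ℕ) (a : ℕ → Polynomial K) (hJ : a J ≠ 0)
    (b : ℕ → Polynomial K)
    (hb : ∀ ℓ, b ℓ = ∑ j ∈ Finset.Icc ℓ J,
      (j.choose ℓ : K) • ((a (J - j)).comp (Polynomial.X + Polynomial.C ((j : K) - (J : K)))))
    (d : ℕ)
    (hd_le : ∀ ℓ ∈ Finset.range (J + 1), (b ℓ).degree ≤ ((d + ℓ : ℕ) : WithBot ℕ))
    (hd_eq : ∃ ℓ ∈ Finset.range (J + 1), (b ℓ).degree = ((d + ℓ : ℕ) : WithBot ℕ))
    (f : ℕ → K)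
    (hf : ∀ s : ℕ, f s = ∑ ℓ ∈ Finset.range (J + 1),
      (b ℓ).coeff (d + ℓ) * (s.descFactorial ℓ : K))
    (hnondeg : ∀ s : ℕ, f s ≠ 0)
    (γ : K)
    (hsym : ∀ i ≤ J / 2,
      (a i).comp (Polynomial.C γ + Polynomial.X)
        = (-1 : Polynomial K) ^ d *
          ((a (J - i)).comp (Polynomial.C γ - Polynomial.X - (J : Polynomial K))))
    (Lstar : Polynomial K → Polynomial K)
    (hLstar : ∀ x : Polynomial K, Lstar x = ∑ i ∈ Finset.range (J + 1),
      ((a i).comp (Polynomial.X - (i : Polynomial K))) * (x.comp (Polynomial.X - (i : Polynomial K)))) :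
    ∀ m : ℕ, 0 < m → ∃ x : Polynomial K,
      (Polynomial.X - Polynomial.C γ) ^ m - Lstar x ∈ Submodule.span K
        ((fun i : ℕ => (Polynomial.X - Polynomial.C γ) ^ i) ''
          {i : ℕ | i < d ∧ i % 2 = m % 2}) := by
  intro m _
  have hL0 : Lstar 0 = 0 := by rw [hLstar]; simp
  have hsa := hsym_all J d a γ hsym
  have hLsym := LSym J d a γ hsa Lstar hLstar
  have hLs : ∀ x, Lstar x = ∑ ℓ ∈ range (J + 1),
      b ℓ * ((Dop K ^ ℓ) x).comp (X - (J : Polynomial K)) :=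
    Lstar_eq J a b hb Lstar hLstar
  have hsmul : ∀ (c : K) (y x' : Polynomial K),
      Lstar (C c * y + x') = C c * Lstar y + Lstar x' :=
    Lstar_add_smul J a Lstar hLstar
  have main : ∀ s : ℕ, ∀ p : Polynomial K, p.degree < (s : ℕ) →
      p.comp (C (2*γ) - X) = C ((-1:K)^m) * p →
      ∃ x, p - Lstar x ∈ Submodule.span K
        ((fun i : ℕ => (X - C γ)^i) '' {i : ℕ | i < d ∧ i % 2 = m % 2}) := by
    intro s
    induction s with
    | zero =>
        intro p hdeg _
        have hp : p = 0 := by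
          rw [Nat.cast_zero] at hdeg
          exact degree_eq_bot.mp (Nat.WithBot.lt_zero_iff.mp hdeg)
        exact ⟨0, by rw [hp, hL0, sub_zero]; exact Submodule.zero_mem _⟩
    | succ s ih =>
        intro p hdeg hT
        rcases eq_or_ne p 0 with rfl | hp0
        · exact ⟨0, by rw [hL0, sub_zero]; exact Submodule.zero_mem _⟩
        rcases lt_or_ge p.natDegree d with hlow | hlow
        · refine ⟨0, ?_⟩
          rw [hL0, sub_zero]
          exact low_deg_mem γ d m p (by rw [degree_eq_natDegree hp0]; exact_mod_cast hlow) hT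
        · set n := p.natDegree with hn
          have hdn : p.degree = (n:ℕ) := degree_eq_natDegree hp0
          have hns : n ≤ s := by
            rw [hdn] at hdeg
            exact_mod_cast Nat.lt_succ_iff.mp (by exact_mod_cast hdeg)
          have hpcn : p.coeff n ≠ 0 := by
            rw [hn]; exact fun hc => hp0 (leadingCoeff_eq_zero.mp hc)
          have hsign : ((-1:K))^n = (-1)^m := by
            have hc := congrArg (fun r => r.coeff n) hT
            simp only [coeff_C_mul] at hc
            rw [comp_C_sub_X_coeff p (2*γ) n (le_of_eq hdn)] at hc
            exact mul_right_cancel₀ hpcn hc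
          set e := n - d with he
          have hed : e + d = n := by omega
          set y : Polynomial K := (X - C (γ - (J:K)/2))^e with hy
          have hydeg : y.degree = (e : ℕ) := by
            rw [hy, degree_pow, degree_X_sub_C]
            simp
          have hyco : y.coeff e = 1 := by
            have hmon : y.Monic := (monic_X_sub_C _).pow e
            have hnd : y.natDegree = e := by rw [hy, natDegree_pow, natDegree_X_sub_C, mul_one]
            rw [← hnd]
            exact hmon.coeff_natDegree
          obtain ⟨hLyd, hLyc⟩ :=
            LemmaA J b d hd_le f hf Lstar hLs y e (le_of_eq hydeg)
          rw [hyco, mul_one] at hLyc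
          have hUy : y.comp (C (2*γ) - (J:Polynomial K) - X) = C ((-1:K)^e) * y := by
            rw [hy, pow_comp, sub_comp, X_comp, C_comp]
            have hCC : (C (2*γ) : Polynomial K) - C (J:K) - C (γ - (J:K)/2)
                = C (γ - (J:K)/2) := by
              rw [← C_sub, ← C_sub]
              congr 1
              ring
            have harg : (C (2*γ) : Polynomial K) - (J:Polynomial K) - X - C (γ - (J:K)/2)
                = -(X - C (γ - (J:K)/2)) := by
              rw [← C_eq_natCast]
              linear_combination hCC
            rw [harg, neg_pow,
              show ((-1:Polynomial K))^e = C ((-1:K)^e) from by rw [map_pow, map_neg, map_one]]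
          have hTLy : (Lstar y).comp (C (2*γ) - X) = C ((-1:K)^m) * Lstar y := by
            have h1 := hLsym y
            rw [hUy] at h1
            have h2 : Lstar (C ((-1:K)^e) * y) = C ((-1:K)^e) * Lstar y := by
              have h3 := hsmul ((-1:K)^e) y 0
              rwa [add_zero, hL0, add_zero] at h3
            rw [h2] at h1
            have hdd : ((-1:Polynomial K))^d * ((-1:Polynomial K))^d = 1 := by
              rw [← pow_add]; exact Even.neg_one_pow ⟨d, by ring⟩
            calc (Lstar y).comp (C (2*γ) - X)
                = ((-1:Polynomial K)^d * (-1:Polynomial K)^d) *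
                    (Lstar y).comp (C (2*γ) - X) := by rw [hdd, one_mul]
              _ = (-1:Polynomial K)^d * (C ((-1:K)^e) * Lstar y) := by
                  rw [mul_assoc, ← h1]
              _ = C ((-1:K)^m) * Lstar y := by
                  rw [show ((-1:Polynomial K))^d = C ((-1:K)^d) from by
                      rw [map_pow, map_neg, map_one],
                    ← mul_assoc, ← C_mul, ← pow_add,
                    show d + e = n from by omega, hsign]
          set c := p.coeff n / f e with hc
          have hcfe : c * f e = p.coeff n := div_mul_cancel₀ _ (hnondeg e)
          set p' := p - C c * Lstar y with hp'
          have hT' : p'.comp (C (2*γ) - X) = C ((-1:K)^m) * p' := by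
            rw [hp', sub_comp, mul_comp, C_comp, hT, hTLy]
            ring
          have hLycn : (Lstar y).coeff n = f e := by rw [← hed]; exact hLyc
          have hdeg' : p'.degree < (s : ℕ) := by
            have h1 : p'.degree ≤ (n : ℕ) := by
              apply le_trans (degree_sub_le _ _)
              rw [max_le_iff]
              refine ⟨le_of_eq hdn, le_trans (degree_mul_le _ _) ?_⟩
              calc (C c).degree + (Lstar y).degree ≤ 0 + ((e + d : ℕ) : WithBot ℕ) :=
                  add_le_add degree_C_le hLyd
                _ = ((e + d : ℕ) : WithBot ℕ) := zero_add _
                _ = ((n : ℕ) : WithBot ℕ) := by rw [hed]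
            have h2 : p'.coeff n = 0 := by
              rw [hp', coeff_sub, coeff_C_mul, hLycn, hcfe, sub_self]
            exact lt_of_lt_of_le (degree_lt_of_coeff_zero h1 h2) (by exact_mod_cast hns)
          obtain ⟨x', hx'⟩ := ih p' hdeg' hT'
          refine ⟨C c * y + x', ?_⟩
          rw [hsmul c y x',
            show p - (C c * Lstar y + Lstar x') = p' - Lstar x' from by rw [hp']; ring]
          exact hx'
  have hTpow : ((X - C γ)^m).comp (C (2*γ) - X) = C ((-1:K)^m) * (X - C γ)^m := by
    rw [pow_comp, sub_comp, X_comp, C_comp]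
    rw [show (C (2*γ):Polynomial K) - X - C γ = -(X - C γ) from by
      rw [show (C (2*γ):Polynomial K) = C γ + C γ from by rw [← C_add]; congr 1; ring]
      ring]
    rw [neg_pow, show ((-1:Polynomial K))^m = C ((-1:K)^m) from by rw [map_pow, map_neg, map_one]]
  have hdegm : ((X - C γ)^m : Polynomial K).degree < ((m + 1 : ℕ) : WithBot ℕ) := by
    rw [degree_pow, degree_X_sub_C]
    simp only [nsmul_eq_mul, mul_one]
    exact_mod_cast Nat.lt_succ_self m
  exact main (m + 1) ((X - C γ)^m) hdegm hTpow
end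

section
/- Let K be a field of characteristic 0 and let L = ∑_{i=0}^{J} a_i(k) σ^i with a_i ∈ K[k], a_J ≠ 0, d = deg(L) ≥ 0, L nondegenerated, and suppose L is power-partible with respect to γ ∈ K, i.e. a_i(γ+k) = (−1)^d a_{J−i}(γ−k−J) for i = 0, …, ⌊J/2⌋. Let α_s ∈ K \ {0} for each s ∈ ℕ and set x_s(k) = α_s · (k − γ + J/2)^s. Then for every positive integer m there exist scalars u_i, v_j ∈ K such that (k−γ)^m = ∑_{0 ≤ i < d, i ≡ m (mod 2)} u_i (k−γ)^i + ∑_{0 ≤ j ≤ m−d, d+j ≡ m (mod 2)} v_j · L*(x_j(k)) as polynomials in K[k]. -/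
set_option linter.unusedSectionVars false
set_option maxHeartbeats 1000000

open Polynomial Finset

section Aux
variable {K : Type*} [Field K] [CharZero K]

noncomputable def pdelta (p : Polynomial K) : Polynomial K := p.comp (X + 1) - p

lemma comp_X_add_C_comp (p : Polynomial K) (r t : K) :
    (p.comp (X + C r)).comp (X + C t) = p.comp (X + C (t + r)) := by
  rw [comp_assoc, add_comp, X_comp, C_comp, add_assoc, ← C_add]

lemma pdelta_add_self (p : Polynomial K) : pdelta p + p = p.comp (X + 1) := by
  simp [pdelta]

lemma newton (p : Polynomial K) (j : ℕ) :
    p.comp (X + C (j : K)) = ∑ ℓ ∈ range (j + 1), (j.choose ℓ : K) • pdelta^[ℓ] p := by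
  induction j generalizing p with
  | zero => simp
  | succ j ih =>
    have h1 : p.comp (X + C ((j + 1 : ℕ) : K)) = (p.comp (X + C (1:K))).comp (X + C (j : K)) := by
      rw [comp_X_add_C_comp]; push_cast; ring_nf
    have h2 : p.comp (X + C (1:K)) = pdelta p + p := by
      rw [pdelta_add_self]; norm_num
    rw [h1, h2, add_comp, ih (pdelta p), ih p]
    rw [Finset.sum_range_succ' (fun ℓ => (((j+1).choose ℓ : K)) • pdelta^[ℓ] p)]
    simp only [Nat.choose_succ_succ', Nat.cast_add, add_smul, Nat.choose_zero_right,
      Nat.cast_one, one_smul, Function.iterate_zero_apply]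
    rw [Finset.sum_add_distrib, add_assoc]
    congr 1
    rw [Finset.sum_range_succ' (fun ℓ => (j.choose ℓ : K) • pdelta^[ℓ] p),
      Finset.sum_range_succ (fun x => ((j.choose (x+1) : K)) • pdelta^[x+1] p)]
    simp [Nat.choose_succ_self]

lemma comp_shift_natDegree (q : Polynomial K) (c : K) :
    (q.comp (X + C c)).natDegree = q.natDegree := by
  rw [← taylor_apply, natDegree_taylor]

lemma hasseDeriv_eq_C (q : Polynomial K) (t : ℕ) (h : q.natDegree ≤ t) :
    hasseDeriv t q = C (q.coeff t) := by
  ext n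
  rw [hasseDeriv_coeff, coeff_C]
  match n with
  | 0 => simp
  | (n+1) =>
    simp only [Nat.add_eq, if_neg (Nat.succ_ne_zero n)]
    rw [coeff_eq_zero_of_natDegree_lt (lt_of_le_of_lt h (by omega)), mul_zero]

lemma comp_shift_coeff (q : Polynomial K) (c : K) (t : ℕ) (h : q.natDegree ≤ t) :
    (q.comp (X + C c)).coeff t = q.coeff t := by
  rw [← taylor_apply, taylor_coeff, hasseDeriv_eq_C q t h, eval_C]

lemma hasseDeriv_eq_lin (q : Polynomial K) (s : ℕ) (h : q.natDegree ≤ s + 1) :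
    hasseDeriv s q = C (q.coeff s) + C ((s+1 : K) * q.coeff (s+1)) * X := by
  ext n
  rw [hasseDeriv_coeff]
  match n with
  | 0 => simp
  | 1 =>
    rw [coeff_add, coeff_C, if_neg one_ne_zero, coeff_C_mul, coeff_X_one, mul_one, zero_add,
      Nat.add_comm 1 s, Nat.choose_succ_self_right]
    push_cast
    ring
  | (n+2) =>
    rw [coeff_eq_zero_of_natDegree_lt (lt_of_le_of_lt h (by omega)), mul_zero]
    rw [coeff_add, coeff_C, coeff_C_mul, coeff_X]
    simp

lemma X_add_one_eq (K : Type*) [Field K] : (X + 1 : Polynomial K) = X + C 1 := by rw [map_one]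

lemma pdelta_natDegree_le (p : Polynomial K) (s : ℕ) (h : p.natDegree ≤ s + 1) :
    (pdelta p).natDegree ≤ s := by
  rw [natDegree_le_iff_coeff_eq_zero]
  intro m hm
  rw [pdelta, coeff_sub, X_add_one_eq]
  rcases Nat.lt_or_ge (s+1) m with h1 | h1
  · rw [coeff_eq_zero_of_natDegree_lt (by rw [comp_shift_natDegree]; omega : (p.comp (X + C (1:K))).natDegree < m),
      coeff_eq_zero_of_natDegree_lt (by omega), sub_zero]
  · have hm1 : m = s + 1 := by omega
    subst hm1
    rw [comp_shift_coeff p 1 (s+1) h, sub_self]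

lemma pdelta_coeff_top (p : Polynomial K) (s : ℕ) (h : p.natDegree ≤ s + 1) :
    (pdelta p).coeff s = (s + 1 : K) * p.coeff (s + 1) := by
  rw [pdelta, coeff_sub, X_add_one_eq, ← taylor_apply, taylor_coeff, hasseDeriv_eq_lin p s h]
  simp

lemma pdelta_C (c : K) : pdelta (C c) = 0 := by simp [pdelta]

lemma pdelta_iter_facts (p : Polynomial K) (s : ℕ) (h : p.natDegree ≤ s) :
    ∀ ℓ ≤ s, (pdelta^[ℓ] p).natDegree ≤ s - ℓ ∧
      (pdelta^[ℓ] p).coeff (s - ℓ) = (s.descFactorial ℓ : K) * p.coeff s := by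
  intro ℓ
  induction ℓ with
  | zero => intro _; simpa using h
  | succ ℓ ih =>
    intro hl
    obtain ⟨h1, h2⟩ := ih (by omega)
    have hs : s - ℓ = (s - (ℓ+1)) + 1 := by omega
    rw [hs] at h1 h2
    constructor
    · rw [Function.iterate_succ_apply']
      exact pdelta_natDegree_le _ _ h1
    · rw [Function.iterate_succ_apply', pdelta_coeff_top _ _ h1, h2,
        Nat.descFactorial_succ]
      have hcast : ((s - (ℓ+1) : ℕ) : K) + 1 = ((s - ℓ : ℕ) : K) := by
        have : (s - (ℓ+1)) + 1 = s - ℓ := by omega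
        rw [← this]; push_cast; ring
      rw [hcast]
      push_cast
      ring

lemma pdelta_iter_zero (p : Polynomial K) (s : ℕ) (h : p.natDegree ≤ s) :
    ∀ ℓ, s < ℓ → pdelta^[ℓ] p = 0 := by
  have h0 : pdelta^[s+1] p = 0 := by
    have := (pdelta_iter_facts p s h s le_rfl).1
    rw [Nat.sub_self, Nat.le_zero] at this
    obtain ⟨c, hc⟩ := Polynomial.natDegree_eq_zero.mp this
    rw [Function.iterate_succ_apply', ← hc, pdelta_C]
  intro ℓ hl
  obtain ⟨t, ht⟩ : ∃ t, ℓ = t + (s + 1) := ⟨ℓ - (s+1), by omega⟩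
  subst ht
  rw [Function.iterate_add_apply, h0]
  exact Function.iterate_fixed (by simp [pdelta]) t

lemma key_identity (J : ℕ) (a : ℕ → Polynomial K) (b : ℕ → Polynomial K)
    (hb : ∀ ℓ, b ℓ = ∑ j ∈ Finset.Icc ℓ J,
      (j.choose ℓ : K) • ((a (J - j)).comp (X + C ((j : K) - (J : K)))))
    (Lstar : Polynomial K → Polynomial K)
    (hLstar : ∀ x : Polynomial K, Lstar x = ∑ i ∈ Finset.range (J + 1),
      ((a i).comp (X - (i : Polynomial K))) * (x.comp (X - (i : Polynomial K))))
    (x : Polynomial K) :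
    Lstar x = ∑ ℓ ∈ range (J + 1), b ℓ * pdelta^[ℓ] (x.comp (X - C (J : K))) := by
  set y : Polynomial K := x.comp (X - C (J : K)) with hy
  have hcast : ∀ i : ℕ, (X - (i : Polynomial K)) = X + C (-(i:K)) := by
    intro i; rw [map_neg, Polynomial.C_eq_natCast]; ring
  have step1 : Lstar x = ∑ j ∈ range (J + 1),
      ((a (J - j)).comp (X + C ((j : K) - (J : K)))) * (y.comp (X + C (j : K))) := by
    rw [hLstar, ← Finset.sum_range_reflect]
    apply Finset.sum_congr rfl
    intro j hj
    have hjJ : j ≤ J := by simp at hj; omega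
    have e1 : (J + 1 - 1 - j) = J - j := by omega
    have e2 : (X - ((J - j : ℕ) : Polynomial K)) = X + C ((j:K) - (J:K)) := by
      rw [hcast (J - j)]
      congr 1
      push_cast [hjJ]
      ring
    have e3 : y.comp (X + C (j : K)) = x.comp (X + C ((j:K) - (J:K))) := by
      rw [hy, comp_assoc]
      congr 1
      simp only [sub_comp, X_comp, C_comp, C_sub]
      ring
    rw [e1, e2, e3]
  rw [step1]
  have step2 : ∀ j ∈ range (J + 1), ((a (J - j)).comp (X + C ((j : K) - (J : K)))) *
      (y.comp (X + C (j : K)))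
      = ∑ ℓ ∈ range (J + 1), (j.choose ℓ : K) •
         (((a (J - j)).comp (X + C ((j : K) - (J : K)))) * pdelta^[ℓ] y) := by
    intro j hj
    have hjJ : j + 1 ≤ J + 1 := by simp at hj; omega
    rw [newton y j, Finset.mul_sum]
    rw [Finset.sum_subset (Finset.range_subset_range.mpr hjJ)]
    · apply Finset.sum_congr rfl
      intro ℓ _
      rw [mul_smul_comm]
    · intro ℓ _ hℓ
      simp only [Finset.mem_range, not_lt] at hℓ
      rw [Nat.choose_eq_zero_of_lt (by omega), Nat.cast_zero, zero_smul, mul_zero]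
  rw [Finset.sum_congr rfl step2, Finset.sum_comm]
  apply Finset.sum_congr rfl
  intro ℓ hℓ
  have hℓJ : ℓ ≤ J := by simp at hℓ; omega
  have hsub : Finset.Icc ℓ J ⊆ range (J + 1) := by
    intro j hj
    simp only [Finset.mem_Icc] at hj
    simp only [Finset.mem_range]
    omega
  rw [hb ℓ, Finset.sum_mul]
  rw [← Finset.sum_subset hsub (fun j hjr hj => by
    simp only [Finset.mem_Icc, not_and, not_le] at hj
    simp only [Finset.mem_range] at hjr
    have hjl : j < ℓ := by
      rcases Nat.lt_or_ge j ℓ with h | h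
      · exact h
      · exact absurd (hj h) (by omega)
    rw [Nat.choose_eq_zero_of_lt hjl, Nat.cast_zero, zero_smul])]
  apply Finset.sum_congr rfl
  intro j _
  rw [smul_mul_assoc]

lemma Lstar_coeff (J : ℕ) (a : ℕ → Polynomial K) (b : ℕ → Polynomial K)
    (hb : ∀ ℓ, b ℓ = ∑ j ∈ Finset.Icc ℓ J,
      (j.choose ℓ : K) • ((a (J - j)).comp (X + C ((j : K) - (J : K)))))
    (d : ℕ) (hd : ∀ ℓ, ℓ ≤ J → (b ℓ).natDegree ≤ d + ℓ)
    (f : ℕ → K)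
    (hf : ∀ s : ℕ, f s = ∑ ℓ ∈ Finset.range (J + 1),
      (b ℓ).coeff (d + ℓ) * (s.descFactorial ℓ : K))
    (Lstar : Polynomial K → Polynomial K)
    (hLstar : ∀ x : Polynomial K, Lstar x = ∑ i ∈ Finset.range (J + 1),
      ((a i).comp (X - (i : Polynomial K))) * (x.comp (X - (i : Polynomial K))))
    (x : Polynomial K) (s : ℕ) (hx : x.natDegree ≤ s) :
    (Lstar x).natDegree ≤ d + s ∧ (Lstar x).coeff (d + s) = f s * x.coeff s := by
  rw [key_identity J a b hb Lstar hLstar x]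
  set y : Polynomial K := x.comp (X - C (J : K)) with hy
  have hXsub : (X - C ((J:K)) : Polynomial K) = X + C (-(J:K)) := by rw [map_neg]; ring
  have hynd : y.natDegree ≤ s := by rw [hy, hXsub, comp_shift_natDegree]; exact hx
  have hyc : y.coeff s = x.coeff s := by rw [hy, hXsub, comp_shift_coeff x _ s hx]
  constructor
  · apply natDegree_sum_le_of_forall_le
    intro ℓ hℓ
    simp only [Finset.mem_range] at hℓ
    rcases le_or_gt ℓ s with h | h
    · calc (b ℓ * pdelta^[ℓ] y).natDegree ≤ (b ℓ).natDegree + (pdelta^[ℓ] y).natDegree :=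
        natDegree_mul_le
      _ ≤ (d + ℓ) + (s - ℓ) := by
          exact Nat.add_le_add (hd ℓ (by omega)) ((pdelta_iter_facts y s hynd ℓ h).1)
      _ ≤ d + s := by omega
    · rw [pdelta_iter_zero y s hynd ℓ h, mul_zero]
      simp
  · rw [finset_sum_coeff, hf s, Finset.sum_mul]
    apply Finset.sum_congr rfl
    intro ℓ hℓ
    simp only [Finset.mem_range] at hℓ
    rcases le_or_gt ℓ s with h | h
    · have hds : d + s = (d + ℓ) + (s - ℓ) := by omega
      rw [hds, coeff_mul_add_eq_of_natDegree_le (hd ℓ (by omega)) (pdelta_iter_facts y s hynd ℓ h).1,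
        (pdelta_iter_facts y s hynd ℓ h).2, hyc]
      ring
    · rw [pdelta_iter_zero y s hynd ℓ h, mul_zero, coeff_zero,
        Nat.descFactorial_eq_zero_iff_lt.mpr h]
      simp

section Symm
variable (J : ℕ) (a : ℕ → Polynomial K) (d : ℕ) (γ : K)

lemma hsym_ext
    (hsym : ∀ i ≤ J / 2,
      (a i).comp (C γ + X)
        = (-1 : Polynomial K) ^ d * ((a (J - i)).comp (C γ - X - (J : Polynomial K)))) :
    ∀ i ≤ J, (a i).comp (C γ + X)
        = (-1 : Polynomial K) ^ d * ((a (J - i)).comp (C γ - X - (J : Polynomial K))) := by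
  intro i hi
  rcases le_or_gt i (J / 2) with h | h
  · exact hsym i h
  · have hi' : J - i ≤ J / 2 := by omega
    have h0 := hsym (J - i) hi'
    have hJi : J - (J - i) = i := by omega
    rw [hJi] at h0
    have h1 := congrArg (fun p => p.comp (-X - C (J : K))) h0
    simp only [comp_assoc, mul_comp, pow_comp, neg_comp, one_comp, add_comp, sub_comp, C_comp,
      X_comp, natCast_comp] at h1
    -- h1 : (a (J-i)).comp (C γ + (-X - C J)) = (-1)^d * (a i).comp (C γ - (-X - C J) - J)
    have e1 : (C γ + (-X - C (J:K))) = C γ - X - (J : Polynomial K) := by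
      rw [Polynomial.C_eq_natCast]; ring
    have e2 : (C γ - (-X - C (J:K)) - (J : Polynomial K)) = C γ + X := by
      rw [Polynomial.C_eq_natCast]; ring
    rw [e1] at h1
    have h2 : (a (J - i)).comp (C γ - X - (J : Polynomial K)) = (-1:Polynomial K)^d * (a i).comp (C γ + X) := by
      rw [h1]; rw [e2]
    rw [h2, ← mul_assoc, ← pow_add]
    have hone : (-1 : Polynomial K) ^ (d + d) = 1 := by
      rw [← two_mul, pow_mul]; norm_num
    rw [hone, one_mul]
end Symm

lemma Lstar_symm (J : ℕ) (a : ℕ → Polynomial K) (d : ℕ) (γ : K)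
    (hsym : ∀ i ≤ J / 2, (a i).comp (C γ + X)
        = (-1 : Polynomial K) ^ d * ((a (J - i)).comp (C γ - X - (J : Polynomial K))))
    (Lstar : Polynomial K → Polynomial K)
    (hLstar : ∀ x : Polynomial K, Lstar x = ∑ i ∈ Finset.range (J + 1),
      ((a i).comp (X - (i : Polynomial K))) * (x.comp (X - (i : Polynomial K))))
    (αs : K) (s : ℕ) (x : Polynomial K)
    (hx : x = C αs * (X - C γ + C ((J : K) / 2)) ^ s) :
    (Lstar x).comp (C γ - X) = (-1 : Polynomial K) ^ (d + s) * (Lstar x).comp (C γ + X) := by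
  have hext := hsym_ext J a d γ hsym
  rw [hLstar x, Polynomial.sum_comp, Polynomial.sum_comp, Finset.mul_sum, ← Finset.sum_range_reflect]
  apply Finset.sum_congr rfl
  intro i hi
  have hiJ : i ≤ J := by simp only [Finset.mem_range] at hi; omega
  have hJiJ : J - i ≤ J := by omega
  set k : ℕ := J - i with hk
  have hJk : J - k = i := by omega
  have e0 : J + 1 - 1 - i = k := by omega
  rw [e0]
  -- LHS term: ((a k).comp (X - k) * x.comp (X - k)).comp (C γ - X)
  simp only [mul_comp, comp_assoc, sub_comp, X_comp, natCast_comp, C_comp]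
  -- now comps are (a k).comp (C γ - X - ↑k) etc.
  have hA : (a k).comp (C γ - X - (k : Polynomial K))
      = (-1 : Polynomial K) ^ d * (a i).comp (C γ + X - (i : Polynomial K)) := by
    have h0 := hext k (by omega)
    have h1 := congrArg (fun p => p.comp (-X - C (k : K))) h0
    simp only [comp_assoc, mul_comp, pow_comp, neg_comp, one_comp, add_comp, sub_comp, C_comp,
      X_comp, natCast_comp] at h1
    rw [hJk] at h1
    have e1 : (C γ + (-X - C (k:K))) = C γ - X - (k : Polynomial K) := by
      rw [Polynomial.C_eq_natCast]; ring
    have e2 : (C γ - (-X - C (k:K)) - (J : Polynomial K)) = C γ + X - (i : Polynomial K) := by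
      rw [Polynomial.C_eq_natCast, hk]
      push_cast [Nat.cast_sub hiJ]
      ring
    rw [e1, e2] at h1
    exact h1
  have hB : x.comp (C γ - X - (k : Polynomial K))
      = (-1 : Polynomial K) ^ s * x.comp (C γ + X - (i : Polynomial K)) := by
    rw [hx]
    simp only [mul_comp, C_comp, pow_comp, add_comp, sub_comp, X_comp]
    have hbase : (C γ - X - (k : Polynomial K) - C γ + C ((J:K)/2))
        = -(C γ + X - (i : Polynomial K) - C γ + C ((J:K)/2)) := by
      have hkc : (k : Polynomial K) = (J : Polynomial K) - (i : Polynomial K) := by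
        rw [hk]; push_cast [Nat.cast_sub hiJ]; ring
      have hJ2 : C ((J:K)/2) + C ((J:K)/2) = (J : Polynomial K) := by
        rw [← C_add, ← Polynomial.C_eq_natCast]; congr 1; field_simp; ring
      rw [hkc, ← hJ2]; ring
    rw [hbase, neg_pow]
    ring
  rw [hA, hB, pow_add]
  ring

lemma comp_neg_X_coeff (p : Polynomial K) (n : ℕ) :
    (p.comp (-X)).coeff n = (-1 : K) ^ n * p.coeff n := by
  induction p using Polynomial.induction_on' with
  | add p q hp hq => rw [add_comp, coeff_add, hp, hq, coeff_add, mul_add]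
  | monomial k c =>
    rw [monomial_comp]
    have e : C c * (-X : Polynomial K) ^ k = C (c * (-1:K)^k) * X ^ k := by
      rw [neg_pow, map_mul, map_pow, map_neg, map_one]; ring
    rw [e, coeff_C_mul, coeff_X_pow, coeff_monomial]
    by_cases h : n = k
    · subst h; simp; ring
    · simp [h, Ne.symm h]

lemma parity_coeff (γ : K) (p : Polynomial K) (n : ℕ)
    (hsymm : p.comp (C γ - X) = (-1 : Polynomial K) ^ n * p.comp (C γ + X))
    (i : ℕ) (hi : i % 2 ≠ n % 2) :
    (p.comp (C γ + X)).coeff i = 0 := by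
  set q : Polynomial K := p.comp (C γ + X) with hq
  have h1 : q.comp (-X) = (-1 : Polynomial K) ^ n * q := by
    rw [hq, comp_assoc]
    have : (C γ + X).comp (-X) = C γ - X := by
      rw [add_comp, C_comp, X_comp]; ring
    rw [this, hsymm]
  have h2 := congrArg (fun r => r.coeff i) h1
  simp only [comp_neg_X_coeff] at h2
  have h3 : ((-1 : Polynomial K) ^ n * q).coeff i = (-1 : K) ^ n * q.coeff i := by
    rw [show ((-1 : Polynomial K) ^ n) = C ((-1 : K) ^ n) by rw [map_pow, map_neg, map_one],
      coeff_C_mul]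
  rw [h3] at h2
  have hne : ((-1 : K) ^ i) = -((-1 : K) ^ n) := by
    rcases Nat.even_or_odd i with he | ho
    · have : Odd n := by
        rcases Nat.even_or_odd n with he2 | ho2
        · exfalso; apply hi; rw [Nat.even_iff] at he he2; omega
        · exact ho2
      rw [he.neg_one_pow, this.neg_one_pow]; ring
    · have : Even n := by
        rcases Nat.even_or_odd n with he2 | ho2
        · exact he2
        · exfalso; apply hi; rw [Nat.odd_iff] at ho ho2; omega
      rw [ho.neg_one_pow, this.neg_one_pow]
  rw [hne] at h2
  -- h2 : -((-1)^n) * q.coeff i = (-1)^n * q.coeff i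
  have h4 : (-1:K)^n * (2 * q.coeff i) = 0 := by linear_combination -h2
  rcases mul_eq_zero.mp h4 with h5 | h5
  · exact absurd h5 (pow_ne_zero n (by norm_num))
  · rcases mul_eq_zero.mp h5 with h6 | h6
    · exact absurd h6 two_ne_zero
    · exact h6

def Emem (d : ℕ) (γ : K) (Q : ℕ → Polynomial K) (m : ℕ) (p : Polynomial K) : Prop :=
  ∃ u v : ℕ → K,
    p = (∑ i ∈ (Finset.range d).filter (fun i => i % 2 = m % 2),
            C (u i) * (X - C γ) ^ i)
        + ∑ j ∈ (Finset.range (m + 1)).filter (fun j => d + j ≤ m ∧ (d + j) % 2 = m % 2),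
            C (v j) * Q j

variable {d : ℕ} {γ : K} {Q : ℕ → Polynomial K} {m : ℕ}

lemma Emem_zero : Emem d γ Q m 0 :=
  ⟨0, 0, by simp⟩

lemma Emem_add {p p' : Polynomial K} (h : Emem d γ Q m p) (h' : Emem d γ Q m p') :
    Emem d γ Q m (p + p') := by
  obtain ⟨u1, v1, h1⟩ := h
  obtain ⟨u2, v2, h2⟩ := h'
  refine ⟨u1 + u2, v1 + v2, ?_⟩
  rw [h1, h2]
  simp only [Pi.add_apply, C_add, add_mul, Finset.sum_add_distrib]
  ring

lemma Emem_smul {p : Polynomial K} (c : K) (h : Emem d γ Q m p) :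
    Emem d γ Q m (C c * p) := by
  obtain ⟨u1, v1, h1⟩ := h
  refine ⟨fun i => c * u1 i, fun j => c * v1 j, ?_⟩
  rw [h1]
  simp only [C_mul, mul_add, Finset.mul_sum]
  ring_nf

lemma Emem_sum {ι : Type*} (s : Finset ι) (g : ι → Polynomial K)
    (h : ∀ i ∈ s, Emem d γ Q m (g i)) : Emem d γ Q m (∑ i ∈ s, g i) := by
  classical
  induction s using Finset.induction_on with
  | empty => simpa using (Emem_zero : Emem d γ Q m 0)
  | insert _ _ hnot ih =>
    rw [Finset.sum_insert hnot]
    exact Emem_add (h _ (Finset.mem_insert_self _ _))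
      (ih fun i hi => h i (Finset.mem_insert_of_mem hi))

lemma Emem_gen1 {i : ℕ} (hid : i < d) (hp : i % 2 = m % 2) :
    Emem d γ Q m ((X - C γ) ^ i) := by
  classical
  refine ⟨fun i' => if i' = i then 1 else 0, 0, ?_⟩
  have hmem : i ∈ (Finset.range d).filter (fun i' => i' % 2 = m % 2) := by
    simp [Finset.mem_filter, Finset.mem_range, hid, hp]
  rw [Finset.sum_eq_single_of_mem i hmem (fun i' _ hne => by simp [if_neg hne])]
  simp

lemma Emem_gen2 {j : ℕ} (hdj : d + j ≤ m) (hp : (d + j) % 2 = m % 2) :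
    Emem d γ Q m (Q j) := by
  classical
  refine ⟨0, fun j' => if j' = j then 1 else 0, ?_⟩
  have hmem : j ∈ (Finset.range (m + 1)).filter
      (fun j' => d + j' ≤ m ∧ (d + j') % 2 = m % 2) := by
    simp only [Finset.mem_filter, Finset.mem_range]
    exact ⟨by omega, hdj, hp⟩
  rw [Finset.sum_eq_single_of_mem j hmem (fun j' _ hne => by simp [if_neg hne])]
  simp

lemma Emem_mono {p : Polynomial K} {m' : ℕ} (hm : m ≤ m') (hpar : m % 2 = m' % 2)
    (h : Emem d γ Q m p) : Emem d γ Q m' p := by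
  classical
  obtain ⟨u, v, h1⟩ := h
  refine ⟨u, fun j => if j ∈ (Finset.range (m + 1)).filter
      (fun j' => d + j' ≤ m ∧ (d + j') % 2 = m' % 2) then v j else 0, ?_⟩
  rw [h1, hpar]
  congr 1
  have hsub : (Finset.range (m + 1)).filter (fun j' => d + j' ≤ m ∧ (d + j') % 2 = m' % 2)
      ⊆ (Finset.range (m' + 1)).filter (fun j' => d + j' ≤ m' ∧ (d + j') % 2 = m' % 2) := by
    intro j hj
    simp only [Finset.mem_filter, Finset.mem_range] at hj ⊢
    exact ⟨by omega, by omega, hj.2.2⟩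
  rw [← Finset.sum_subset hsub (fun j _ hj => by simp only [if_neg hj, map_zero, zero_mul])]
  exact Finset.sum_congr rfl (fun j hj => by simp only [if_pos hj])

end Aux

theorem power_partible_reduction_explicit {K : Type*} [Field K] [CharZero K]
    (J : ℕ) (a : ℕ → Polynomial K) (hJ : a J ≠ 0)
    (b : ℕ → Polynomial K)
    (hb : ∀ ℓ, b ℓ = ∑ j ∈ Finset.Icc ℓ J,
      (j.choose ℓ : K) • ((a (J - j)).comp (Polynomial.X + Polynomial.C ((j : K) - (J : K)))))
    (d : ℕ)
    (hd_le : ∀ ℓ ∈ Finset.range (J + 1), (b ℓ).degree ≤ ((d + ℓ : ℕ) : WithBot ℕ))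
    (hd_eq : ∃ ℓ ∈ Finset.range (J + 1), (b ℓ).degree = ((d + ℓ : ℕ) : WithBot ℕ))
    (f : ℕ → K)
    (hf : ∀ s : ℕ, f s = ∑ ℓ ∈ Finset.range (J + 1),
      (b ℓ).coeff (d + ℓ) * (s.descFactorial ℓ : K))
    (hnondeg : ∀ s : ℕ, f s ≠ 0)
    (γ : K)
    (hsym : ∀ i ≤ J / 2,
      (a i).comp (Polynomial.C γ + Polynomial.X)
        = (-1 : Polynomial K) ^ d *
          ((a (J - i)).comp (Polynomial.C γ - Polynomial.X - (J : Polynomial K))))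
    (Lstar : Polynomial K → Polynomial K)
    (hLstar : ∀ x : Polynomial K, Lstar x = ∑ i ∈ Finset.range (J + 1),
      ((a i).comp (Polynomial.X - (i : Polynomial K))) * (x.comp (Polynomial.X - (i : Polynomial K))))
    (α : ℕ → K) (hα : ∀ s, α s ≠ 0)
    (xs : ℕ → Polynomial K)
    (hxs : ∀ s : ℕ, xs s = Polynomial.C (α s) *
      (Polynomial.X - Polynomial.C γ + Polynomial.C ((J : K) / 2)) ^ s) :
    ∀ m : ℕ, 0 < m → ∃ u v : ℕ → K,
      (Polynomial.X - Polynomial.C γ) ^ m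
        = (∑ i ∈ (Finset.range d).filter (fun i => i % 2 = m % 2),
            Polynomial.C (u i) * (Polynomial.X - Polynomial.C γ) ^ i)
          + ∑ j ∈ (Finset.range (m + 1)).filter
              (fun j => d + j ≤ m ∧ (d + j) % 2 = m % 2),
            Polynomial.C (v j) * Lstar (xs j) := by
  have hd' : ∀ ℓ, ℓ ≤ J → (b ℓ).natDegree ≤ d + ℓ := by
    intro ℓ hℓ
    rw [natDegree_le_iff_degree_le]
    exact hd_le ℓ (by simp only [Finset.mem_range]; omega)
  have hbase : (X - C γ + C ((J:K)/2) : Polynomial K) = X + C ((J:K)/2 - γ) := by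
    rw [C_sub]; ring
  have hxs_nd : ∀ s, (xs s).natDegree ≤ s := by
    intro s
    rw [hxs s, hbase]
    refine le_trans natDegree_mul_le ?_
    rw [natDegree_C, natDegree_pow, natDegree_X_add_C]
    omega
  have hxs_coeff : ∀ s, (xs s).coeff s = α s := by
    intro s
    rw [hxs s, hbase, coeff_C_mul, coeff_X_add_C_pow]
    simp
  have hQfacts : ∀ j, (Lstar (xs j)).natDegree ≤ d + j ∧
      (Lstar (xs j)).coeff (d + j) = f j * α j := by
    intro j
    have h := Lstar_coeff J a b hb d hd' f hf Lstar hLstar (xs j) j (hxs_nd j)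
    rwa [hxs_coeff j] at h
  have hQsym : ∀ j, (Lstar (xs j)).comp (C γ - X)
      = (-1 : Polynomial K) ^ (d + j) * (Lstar (xs j)).comp (C γ + X) :=
    fun j => Lstar_symm J a d γ hsym Lstar hLstar (α j) j (xs j) (hxs j)
  have main : ∀ m : ℕ, Emem d γ (fun j => Lstar (xs j)) m ((X - C γ) ^ m) := by
    intro m
    induction m using Nat.strong_induction_on with
    | _ m ih =>
      rcases lt_or_ge m d with hmd | hmd
      · exact Emem_gen1 hmd rfl
      · set j0 : ℕ := m - d with hj0
        have hdj0 : d + j0 = m := by omega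
        have hc0 : f j0 * α j0 ≠ 0 := mul_ne_zero (hnondeg j0) (hα j0)
        set c0 : K := (f j0 * α j0)⁻¹ with hc0def
        set r : Polynomial K := (X - C γ) ^ m - C c0 * Lstar (xs j0) with hrdef
        have hXg : (X - C γ : Polynomial K) = X + C (-γ) := by rw [map_neg]; ring
        have hpow_coeff : ((X - C γ : Polynomial K) ^ m).coeff m = 1 := by
          rw [hXg, coeff_X_add_C_pow]; simp
        have hpow_nd : ((X - C γ : Polynomial K) ^ m).natDegree ≤ m := by
          rw [hXg, natDegree_pow, natDegree_X_add_C]; omega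
        have hQnd : (Lstar (xs j0)).natDegree ≤ m := by
          rw [← hdj0]; exact (hQfacts j0).1
        have hrnd : r.natDegree ≤ m := by
          rw [hrdef]
          refine le_trans (natDegree_sub_le _ _) (max_le hpow_nd (le_trans natDegree_mul_le ?_))
          rw [natDegree_C]
          omega
        have hrm : r.coeff m = 0 := by
          rw [hrdef, coeff_sub, hpow_coeff, coeff_C_mul, ← hdj0, (hQfacts j0).2, hc0def]
          field_simp
          rw [div_self hc0, sub_self]
        have hrsym : r.comp (C γ - X) = (-1 : Polynomial K) ^ m * r.comp (C γ + X) := by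
          rw [hrdef, sub_comp, sub_comp, mul_comp, mul_comp, C_comp, C_comp, pow_comp, pow_comp,
            sub_comp, sub_comp, X_comp, X_comp, C_comp, C_comp, hQsym j0, hdj0]
          have e1 : (C γ - X - C γ : Polynomial K) = -(C γ + X - C γ) := by ring
          rw [e1, neg_pow]
          ring
        set q : Polynomial K := r.comp (C γ + X) with hqdef
        have hgadd : (C γ + X : Polynomial K) = X + C γ := add_comm _ _
        have hqnd : q.natDegree ≤ m := by
          rw [hqdef, hgadd, comp_shift_natDegree]; exact hrnd
        have hqm : q.coeff m = 0 := by
          rw [hqdef, hgadd, comp_shift_coeff r γ m hrnd]; exact hrm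
        have hqpar : ∀ i, i % 2 ≠ m % 2 → q.coeff i = 0 :=
          fun i hi => parity_coeff γ r m hrsym i hi
        have hrq : r = ∑ i ∈ range (m + 1), C (q.coeff i) * (X - C γ) ^ i := by
          have h2 : r = q.comp (X - C γ) := by
            rw [hqdef, comp_assoc]
            have e2 : (C γ + X : Polynomial K).comp (X - C γ) = X := by
              rw [add_comp, C_comp, X_comp]; ring
            rw [e2, comp_X]
          have h1 : q = ∑ i ∈ range (m + 1), C (q.coeff i) * X ^ i := by
            conv_lhs => rw [q.as_sum_range' (m + 1) (by omega)]
            apply Finset.sum_congr rfl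
            intro i _
            rw [C_mul_X_pow_eq_monomial]
          rw [h2]
          conv_lhs => rw [h1]
          rw [Polynomial.sum_comp]
          apply Finset.sum_congr rfl
          intro i _
          rw [mul_comp, C_comp, pow_comp, X_comp]
        have hEr : Emem d γ (fun j => Lstar (xs j)) m r := by
          rw [hrq]
          apply Emem_sum
          intro i hi
          simp only [Finset.mem_range] at hi
          by_cases hpar : i % 2 = m % 2
          · by_cases him : i = m
            · subst him
              rw [hqm, map_zero, zero_mul]
              exact Emem_zero
            · exact Emem_smul _ (Emem_mono (by omega) hpar (ih i (by omega)))
          · rw [hqpar i hpar, map_zero, zero_mul]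
            exact Emem_zero
        have hfinal : (X - C γ) ^ m = r + C c0 * Lstar (xs j0) := by
          rw [hrdef]; ring
        rw [hfinal]
        exact Emem_add hEr (Emem_smul c0 (Emem_gen2 (le_of_eq hdj0) (by rw [hdj0])))
  intro m _
  exact main m
end

section
/- For every integer n ≥ 1, the Apéry numbers satisfy the recurrence (n+1)^3 · A_{n+1} = (2n+1)(17n^2+17n+5) · A_n − n^3 · A_{n−1}. -/
open Finset

/-- The Apéry numbers `A n = ∑_{k=0}^n (n choose k)^2 ((n+k) choose k)^2`. -/
def apery (n : ℕ) : ℤ :=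
  ∑ k ∈ Finset.range (n + 1), ((n.choose k : ℤ)) ^ 2 * (((n + k).choose k : ℤ)) ^ 2

/-- The summand of the Apéry numbers, over ℚ. -/
def fq (n k : ℕ) : ℚ := ((n.choose k : ℚ)) ^ 2 * (((n + k).choose k : ℚ)) ^ 2

/-- Zeilberger certificate for the Apéry recurrence. -/
def gq (n k : ℕ) : ℚ :=
  4 * (2 * (n:ℚ) + 1) * (2 * (k:ℚ) ^ 2 + (k:ℚ) - (2 * (n:ℚ) + 1) ^ 2) * fq n k

/-- Shifted certificate, for telescoping. -/
def hqa (n : ℕ) : ℕ → ℚ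
  | 0 => 0
  | (k+1) => gq n k

lemma step (m e : ℕ) :
    gq (m+1+e) (m+1) - gq (m+1+e) m
      = ((m:ℚ)+e+2) ^ 3 * fq (m+e+2) (m+1)
        - (2*((m:ℚ)+1+e)+1) * (17*((m:ℚ)+1+e)^2 + 17*((m:ℚ)+1+e) + 5) * fq (m+1+e) (m+1)
        + ((m:ℚ)+1+e) ^ 3 * fq (m+e) (m+1) := by
  have N1 : ((m+e+2).choose (m+1)) * (e+1) = ((m+e+1).choose (m+1)) * (m+e+2) := by
    have h := Nat.choose_mul_succ_eq (m+e+1) (m+1)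
    rw [show m+e+1+1-(m+1) = e+1 from by omega, show m+e+1+1 = m+e+2 from by omega] at h
    omega
  have N2 : ((2*m+e+3).choose (m+1)) * (m+e+2) = ((2*m+e+2).choose (m+1)) * (2*m+e+3) := by
    have h := Nat.choose_mul_succ_eq (2*m+e+2) (m+1)
    rw [show 2*m+e+2+1-(m+1) = m+e+2 from by omega, show 2*m+e+2+1 = 2*m+e+3 from by omega] at h
    omega
  have N3 : ((m+e).choose (m+1)) * (m+e+1) = ((m+e+1).choose (m+1)) * e := by
    have h := Nat.choose_mul_succ_eq (m+e) (m+1)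
    rw [show m+e+1-(m+1) = e from by omega] at h
    omega
  have N4 : ((2*m+e+1).choose (m+1)) * (2*m+e+2) = ((2*m+e+2).choose (m+1)) * (m+e+1) := by
    have h := Nat.choose_mul_succ_eq (2*m+e+1) (m+1)
    rw [show 2*m+e+1+1-(m+1) = m+e+1 from by omega, show 2*m+e+1+1 = 2*m+e+2 from by omega] at h
    omega
  have N5 : ((m+e+1).choose m) * (e+1) = ((m+e+1).choose (m+1)) * (m+1) := by
    have h := Nat.choose_succ_right_eq (m+e+1) m
    rw [show m+e+1-m = e+1 from by omega] at h
    omega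
  have N6 : ((2*m+e+1).choose m) * (2*m+e+2) = ((2*m+e+2).choose (m+1)) * (m+1) := by
    have h := Nat.add_one_mul_choose_eq (2*m+e+1) m
    rw [show 2*m+e+1+1 = 2*m+e+2 from by omega, Nat.mul_comm (2*m+e+2)] at h
    omega
  have r1 : ((m+e+2).choose (m+1) : ℚ)
      = ((m+e+1).choose (m+1) : ℚ) * ((m:ℚ)+e+2) / ((e:ℚ)+1) := by
    rw [eq_div_iff (by positivity)]; exact_mod_cast N1
  have r2 : ((2*m+e+3).choose (m+1) : ℚ)
      = ((2*m+e+2).choose (m+1) : ℚ) * (2*(m:ℚ)+e+3) / ((m:ℚ)+e+2) := by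
    rw [eq_div_iff (by positivity)]; exact_mod_cast N2
  have r3 : ((m+e).choose (m+1) : ℚ)
      = ((m+e+1).choose (m+1) : ℚ) * (e:ℚ) / ((m:ℚ)+e+1) := by
    rw [eq_div_iff (by positivity)]; exact_mod_cast N3
  have r4 : ((2*m+e+1).choose (m+1) : ℚ)
      = ((2*m+e+2).choose (m+1) : ℚ) * ((m:ℚ)+e+1) / (2*(m:ℚ)+e+2) := by
    rw [eq_div_iff (by positivity)]; exact_mod_cast N4
  have r5 : ((m+e+1).choose m : ℚ)
      = ((m+e+1).choose (m+1) : ℚ) * ((m:ℚ)+1) / ((e:ℚ)+1) := by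
    rw [eq_div_iff (by positivity)]; exact_mod_cast N5
  have r6 : ((2*m+e+1).choose m : ℚ)
      = ((2*m+e+2).choose (m+1) : ℚ) * ((m:ℚ)+1) / (2*(m:ℚ)+e+2) := by
    rw [eq_div_iff (by positivity)]; exact_mod_cast N6
  simp only [fq, gq]
  rw [show m+1+e = m+e+1 from by omega, show m+e+1+(m+1) = 2*m+e+2 from by omega,
      show m+e+2+(m+1) = 2*m+e+3 from by omega, show m+e+(m+1) = 2*m+e+1 from by omega,
      show m+e+1+m = 2*m+e+1 from by omega]
  rw [r1, r2, r3, r4, r5, r6]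
  push_cast
  field_simp
  ring

lemma key (n : ℕ) (hn : 1 ≤ n) (k : ℕ) (hk : k < n + 2) :
    hqa n (k+1) - hqa n k
      = ((n:ℚ)+1)^3 * fq (n+1) k
        - (2*(n:ℚ)+1) * (17*(n:ℚ)^2 + 17*(n:ℚ) + 5) * fq n k
        + (n:ℚ)^3 * fq (n-1) k := by
  match k with
  | 0 =>
    simp only [hqa, fq, gq]
    simp only [Nat.choose_zero_right, Nat.add_zero, Nat.cast_one, Nat.cast_zero]
    ring
  | (k+1) =>
    by_cases hkn : k + 1 ≤ n
    · obtain ⟨e, rfl⟩ : ∃ e, n = k + 1 + e := ⟨n - (k+1), by omega⟩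
      simp only [hqa]
      rw [show (k+1+e) + 1 = k+e+2 from by omega, show (k+1+e) - 1 = k+e from by omega,
          step k e]
      push_cast
      ring
    · have hk' : k = n := by omega
      rw [hk']
      simp only [hqa]
      have z1 : (n.choose (n+1)) = 0 := Nat.choose_eq_zero_of_lt (by omega)
      have z2 : ((n-1).choose (n+1)) = 0 := Nat.choose_eq_zero_of_lt (by omega)
      have hf1 : fq n (n+1) = 0 := by simp [fq, z1]
      have hf2 : fq (n-1) (n+1) = 0 := by simp [fq, z2]
      have hg : gq n (n+1) = 0 := by simp [gq, hf1]
      rw [hg, hf1, hf2]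
      -- remaining : - gq n n = (n+1)^3 * fq (n+1) (n+1)
      have W2 : ((2*n+1).choose n) * (n+1) = ((2*n).choose n) * (2*n+1) := by
        have h := Nat.add_one_mul_choose_eq (2*n) n
        have hsymm : (2*n+1).choose (n+1) = (2*n+1).choose n := by
          rw [← Nat.choose_symm (by omega : n+1 ≤ 2*n+1), show 2*n+1-(n+1) = n from by omega]
        rw [hsymm, Nat.mul_comm (2*n+1)] at h
        omega
      have W1 : ((2*n+2).choose (n+1)) * (n+1) = ((2*n+1).choose n) * (2*n+2) := by
        have h := Nat.add_one_mul_choose_eq (2*n+1) n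
        rw [show 2*n+1+1 = 2*n+2 from by omega, Nat.mul_comm (2*n+2)] at h
        omega
      have q2 : ((2*n+1).choose n : ℚ) = ((2*n).choose n : ℚ) * (2*(n:ℚ)+1) / ((n:ℚ)+1) := by
        rw [eq_div_iff (by positivity)]; exact_mod_cast W2
      have q1 : ((2*n+2).choose (n+1) : ℚ)
          = ((2*n+1).choose n : ℚ) * (2*(n:ℚ)+2) / ((n:ℚ)+1) := by
        rw [eq_div_iff (by positivity)]; exact_mod_cast W1
      simp only [fq, gq]
      rw [show n+1+(n+1) = 2*n+2 from by omega, show n+n = 2*n from by omega,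
          Nat.choose_self, Nat.choose_self, q1, q2]
      have hne : ((n:ℚ)+1) ≠ 0 := by positivity
      push_cast
      field_simp
      ring

theorem apery_recurrence (n : ℕ) (hn : 1 ≤ n) :
    ((n : ℤ) + 1) ^ 3 * apery (n + 1)
      = (2 * n + 1) * (17 * (n : ℤ) ^ 2 + 17 * n + 5) * apery n - (n : ℤ) ^ 3 * apery (n - 1) := by
  have htel : ∑ k ∈ range (n+2), (hqa n (k+1) - hqa n k) = hqa n (n+2) - hqa n 0 :=
    Finset.sum_range_sub (hqa n) (n+2)
  have hend : hqa n (n+2) = 0 := by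
    have z1 : (n.choose (n+1)) = 0 := Nat.choose_eq_zero_of_lt (by omega)
    simp [hqa, gq, fq, z1]
  have hsum : ∑ k ∈ range (n+2),
      (((n:ℚ)+1)^3 * fq (n+1) k
        - (2*(n:ℚ)+1) * (17*(n:ℚ)^2 + 17*(n:ℚ) + 5) * fq n k
        + (n:ℚ)^3 * fq (n-1) k) = 0 := by
    rw [← Finset.sum_congr rfl (fun k hk => key n hn k (mem_range.mp hk)), htel, hend]
    simp [hqa]
  have s1 : ∑ k ∈ range (n+2), fq (n+1) k = ((apery (n+1) : ℤ) : ℚ) := by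
    rw [apery]
    push_cast [fq]
    rfl
  have s2 : ∑ k ∈ range (n+2), fq n k = ((apery n : ℤ) : ℚ) := by
    rw [Finset.sum_range_succ]
    have z1 : (n.choose (n+1)) = 0 := Nat.choose_eq_zero_of_lt (by omega)
    have : fq n (n+1) = 0 := by simp [fq, z1]
    rw [this, add_zero, apery]
    push_cast [fq]
    rfl
  have s3 : ∑ k ∈ range (n+2), fq (n-1) k = ((apery (n-1) : ℤ) : ℚ) := by
    rw [show n+2 = (n-1)+1+1+1 from by omega, Finset.sum_range_succ, Finset.sum_range_succ]
    have z1 : ((n-1).choose ((n-1)+1)) = 0 := Nat.choose_eq_zero_of_lt (by omega)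
    have z2 : ((n-1).choose ((n-1)+1+1)) = 0 := Nat.choose_eq_zero_of_lt (by omega)
    have hf1 : fq (n-1) ((n-1)+1) = 0 := by simp [fq, z1]
    have hf2 : fq (n-1) ((n-1)+1+1) = 0 := by simp [fq, z2]
    rw [hf1, hf2, add_zero, add_zero, apery]
    push_cast [fq]
    rfl
  simp only [Finset.sum_add_distrib, Finset.sum_sub_distrib, ← Finset.mul_sum] at hsum
  rw [s1, s2, s3] at hsum
  have hQ : ((n:ℚ)+1)^3 * ((apery (n+1) : ℤ) : ℚ)
      = (2*(n:ℚ)+1) * (17*(n:ℚ)^2 + 17*(n:ℚ) + 5) * ((apery n : ℤ) : ℚ)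
        - (n:ℚ)^3 * ((apery (n-1) : ℤ) : ℚ) := by linarith
  exact_mod_cast hQ
end

section
/- For every polynomial x with rational coefficients and every integer n ≥ 1, ∑_{k=0}^{n−1} [ k^3 x(k−2) − (2k+1)(17k^2+17k+5) x(k−1) + (k+1)^3 x(k) ] · A_k = n^3 · ( x(n−1) A_{n−1} − x(n−2) A_n ), where x is evaluated at the indicated integers (which may be negative). -/
open Finset Polynomial

/-! ### Auxiliary binomial identities over ℚ -/

private lemma choose_q1 (M k : ℕ) :
    ((M : ℚ) + 1 - k) * ((M + 1).choose k : ℚ) = ((M : ℚ) + 1) * (M.choose k : ℚ) := by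
  rcases le_or_gt k (M + 1) with h | h
  · have hN := Nat.choose_mul_succ_eq M k
    have hcast : ((M + 1 - k : ℕ) : ℚ) = (M : ℚ) + 1 - k := by
      push_cast [Nat.cast_sub h]; ring
    have : (M.choose k : ℚ) * ((M : ℚ) + 1) = ((M + 1).choose k : ℚ) * ((M : ℚ) + 1 - k) := by
      rw [← hcast]; exact_mod_cast congrArg (Nat.cast (R := ℚ)) hN
    linarith
  · have h1 : M.choose k = 0 := Nat.choose_eq_zero_of_lt (by omega)
    have h2 : (M + 1).choose k = 0 := Nat.choose_eq_zero_of_lt (by omega)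
    simp [h1, h2]

private lemma choose_q2 (n k : ℕ) :
    (n.choose (k + 1) : ℚ) * ((k : ℚ) + 1) = (n.choose k : ℚ) * ((n : ℚ) - k) := by
  rcases le_or_gt k n with h | h
  · have hN := Nat.choose_succ_right_eq n k
    have hcast : ((n - k : ℕ) : ℚ) = (n : ℚ) - k := by push_cast [Nat.cast_sub h]; ring
    have : (n.choose (k + 1) : ℚ) * ((k : ℚ) + 1) = (n.choose k : ℚ) * ((n - k : ℕ) : ℚ) := by
      exact_mod_cast congrArg (Nat.cast (R := ℚ)) hN
    rw [this, hcast]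
  · have h1 : n.choose (k + 1) = 0 := Nat.choose_eq_zero_of_lt (by omega)
    have h2 : n.choose k = 0 := Nat.choose_eq_zero_of_lt (by omega)
    simp [h1, h2]

private lemma choose_q3 (n k : ℕ) :
    ((n : ℚ) + 1) * (n.choose k : ℚ) = ((n + 1).choose (k + 1) : ℚ) * ((k : ℚ) + 1) := by
  have hN := Nat.add_one_mul_choose_eq n k
  exact_mod_cast congrArg (Nat.cast (R := ℚ)) hN

/-! ### The WZ-style certificate -/

private def Fq (n k : ℕ) : ℚ := ((n.choose k : ℚ)) ^ 2 * (((n + k).choose k : ℚ)) ^ 2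

private def G (m : ℕ) : ℕ → ℚ
  | 0 => 0
  | (j + 1) => 4 * (2 * (m : ℚ) + 3) * ((j : ℚ) * (2 * (j : ℚ) + 1) - (2 * (m : ℚ) + 3) ^ 2)
      * (((m + 1).choose j : ℚ)) ^ 2 * (((m + 1 + j).choose j : ℚ)) ^ 2

private lemma aux_key (M J a b c1 c2 c3 c4 a' b' : ℚ)
    (hd1 : M + 1 - J ≠ 0) (hd2 : M + 1 ≠ 0) (hd3 : M + 2 ≠ 0) (hd4 : M + J + 2 ≠ 0)
    (h1 : (M + 1 - J) * c1 = (M + 2) * a)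
    (h2 : (M - J) * a = (M + 1) * c2)
    (h3 : (M + 2) * c3 = (M + J + 3) * b)
    (h4 : (M + 1) * b = (M + J + 2) * c4)
    (h5 : a * (J + 1) = a' * (M + 1 - J))
    (h6 : (M + J + 2) * b' = b * (J + 1)) :
    (M + 2) ^ 3 * (c1 ^ 2 * c3 ^ 2) + (M + 1) ^ 3 * (c2 ^ 2 * c4 ^ 2)
        - (2 * M + 3) * (17 * M ^ 2 + 51 * M + 39) * (a ^ 2 * b ^ 2)
      = 4 * (2 * M + 3) * ((J + 1) * (2 * (J + 1) + 1) - (2 * M + 3) ^ 2) * (a ^ 2 * b ^ 2)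
        - 4 * (2 * M + 3) * (J * (2 * J + 1) - (2 * M + 3) ^ 2) * (a' ^ 2 * b' ^ 2) := by
  have hc1 : c1 = (M + 2) * a / (M + 1 - J) := by rw [eq_div_iff hd1]; linear_combination h1
  have hc2 : c2 = (M - J) * a / (M + 1) := by rw [eq_div_iff hd2]; linear_combination -h2
  have hc3 : c3 = (M + J + 3) * b / (M + 2) := by rw [eq_div_iff hd3]; linear_combination h3
  have hc4 : c4 = (M + 1) * b / (M + J + 2) := by rw [eq_div_iff hd4]; linear_combination -h4
  have hc5 : a' = a * (J + 1) / (M + 1 - J) := by rw [eq_div_iff hd1]; linear_combination -h5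
  have hc6 : b' = b * (J + 1) / (M + J + 2) := by rw [eq_div_iff hd4]; linear_combination h6
  rw [hc1, hc2, hc3, hc4, hc5, hc6]
  field_simp
  ring

private lemma aux_term (m k : ℕ) :
    ((m : ℚ) + 2) ^ 3 * Fq (m + 2) k + ((m : ℚ) + 1) ^ 3 * Fq m k
        - (2 * (m : ℚ) + 3) * (17 * (m : ℚ) ^ 2 + 51 * (m : ℚ) + 39) * Fq (m + 1) k
      = G m (k + 1) - G m k := by
  match k with
  | 0 => simp [Fq, G]; ring
  | (j + 1) =>
    rcases Nat.lt_or_ge j (m + 1) with hj | hj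
    · -- generic case j ≤ m
      have hjm : j ≤ m := by omega
      have hjq : (j : ℚ) ≤ (m : ℚ) := by exact_mod_cast hjm
      have hd1 : (m : ℚ) + 1 - j ≠ 0 := by intro h; nlinarith
      have hd2 : (m : ℚ) + 1 ≠ 0 := by positivity
      have hd3 : (m : ℚ) + 2 ≠ 0 := by positivity
      have hd4 : (m : ℚ) + j + 2 ≠ 0 := by positivity
      have h1 : ((m : ℚ) + 1 - j) * ((m + 2).choose (j + 1) : ℚ)
          = ((m : ℚ) + 2) * ((m + 1).choose (j + 1) : ℚ) := by
        have h := choose_q1 (m + 1) (j + 1)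
        rw [show m + 1 + 1 = m + 2 from rfl] at h
        push_cast at h
        linear_combination h
      have h2 : ((m : ℚ) - j) * ((m + 1).choose (j + 1) : ℚ)
          = ((m : ℚ) + 1) * (m.choose (j + 1) : ℚ) := by
        have h := choose_q1 m (j + 1)
        push_cast at h
        linear_combination h
      have h3 : ((m : ℚ) + 2) * ((m + 2 + (j + 1)).choose (j + 1) : ℚ)
          = ((m : ℚ) + j + 3) * ((m + 1 + (j + 1)).choose (j + 1) : ℚ) := by
        have h := choose_q1 (m + j + 2) (j + 1)
        rw [show m + j + 2 + 1 = m + 2 + (j + 1) from by omega,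
            show m + j + 2 = m + 1 + (j + 1) from by omega] at h
        push_cast at h
        linear_combination h
      have h4 : ((m : ℚ) + 1) * ((m + 1 + (j + 1)).choose (j + 1) : ℚ)
          = ((m : ℚ) + j + 2) * ((m + (j + 1)).choose (j + 1) : ℚ) := by
        have h := choose_q1 (m + j + 1) (j + 1)
        rw [show m + j + 1 + 1 = m + 1 + (j + 1) from by omega,
            show m + j + 1 = m + (j + 1) from by omega] at h
        push_cast at h
        linear_combination h
      have h5 : ((m + 1).choose (j + 1) : ℚ) * ((j : ℚ) + 1)
          = ((m + 1).choose j : ℚ) * ((m : ℚ) + 1 - j) := by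
        have h := choose_q2 (m + 1) j
        push_cast at h
        linear_combination h
      have h6 : ((m : ℚ) + j + 2) * ((m + 1 + j).choose j : ℚ)
          = ((m + 1 + (j + 1)).choose (j + 1) : ℚ) * ((j : ℚ) + 1) := by
        have h := choose_q3 (m + 1 + j) j
        rw [show m + 1 + j + 1 = m + 1 + (j + 1) from by omega] at h
        push_cast at h
        linear_combination h
      have key := aux_key (m : ℚ) (j : ℚ)
        ((m + 1).choose (j + 1) : ℚ) ((m + 1 + (j + 1)).choose (j + 1) : ℚ)
        ((m + 2).choose (j + 1) : ℚ) (m.choose (j + 1) : ℚ)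
        ((m + 2 + (j + 1)).choose (j + 1) : ℚ) ((m + (j + 1)).choose (j + 1) : ℚ)
        ((m + 1).choose j : ℚ) ((m + 1 + j).choose j : ℚ)
        hd1 hd2 hd3 hd4 h1 h2 h3 h4 (by linear_combination h5) (by linear_combination h6)
      simp only [Fq, G]
      push_cast
      linear_combination key
    · rcases Nat.eq_or_lt_of_le hj with hj' | hj'
      · -- boundary case j = m + 1
        subst hj'
        have z1 : m.choose (m + 1 + 1) = 0 := Nat.choose_eq_zero_of_lt (by omega)
        have z2 : (m + 1).choose (m + 1 + 1) = 0 := Nat.choose_eq_zero_of_lt (by omega)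
        have h := Nat.succ_mul_centralBinom_succ (m + 1)
        simp only [Nat.centralBinom] at h
        rw [show 2 * (m + 1 + 1) = m + 2 + (m + 1 + 1) from by omega,
            show 2 * (m + 1) = m + 1 + (m + 1) from by omega] at h
        have hq : ((m : ℚ) + 2) * ((m + 2 + (m + 1 + 1)).choose (m + 1 + 1) : ℚ)
            = 2 * (2 * (m : ℚ) + 3) * ((m + 1 + (m + 1)).choose (m + 1) : ℚ) := by
          have := congrArg (Nat.cast (R := ℚ)) h
          push_cast at this
          linear_combination this
        simp only [Fq, G, z1, z2, Nat.choose_self, Nat.cast_one, Nat.cast_zero]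
        push_cast
        linear_combination (((m : ℚ) + 2) * (((m : ℚ) + 2) * ((m + 2 + (m + 1 + 1)).choose (m + 1 + 1) : ℚ)
          + 2 * (2 * (m : ℚ) + 3) * ((m + 1 + (m + 1)).choose (m + 1) : ℚ))) * hq
      · -- vanishing case j ≥ m + 2
        have z1 : (m + 2).choose (j + 1) = 0 := Nat.choose_eq_zero_of_lt (by omega)
        have z2 : (m + 1).choose (j + 1) = 0 := Nat.choose_eq_zero_of_lt (by omega)
        have z3 : m.choose (j + 1) = 0 := Nat.choose_eq_zero_of_lt (by omega)
        have z4 : (m + 1).choose j = 0 := Nat.choose_eq_zero_of_lt (by omega)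
        simp [Fq, G, z1, z2, z3, z4]

private lemma apery_eq (n N : ℕ) (h : n < N) :
    (apery n : ℚ) = ∑ k ∈ Finset.range N, Fq n k := by
  have : (apery n : ℚ) = ∑ k ∈ Finset.range (n + 1), Fq n k := by
    simp only [apery, Fq]; push_cast; ring
  rw [this]
  apply Finset.sum_subset (Finset.range_subset_range.2 h)
  intro k hk hk'
  simp only [Finset.mem_range] at hk hk'
  have : n < k := by omega
  simp [Fq, Nat.choose_eq_zero_of_lt this]

private lemma apery_recur (m : ℕ) :
    ((m : ℚ) + 2) ^ 3 * (apery (m + 2) : ℚ) + ((m : ℚ) + 1) ^ 3 * (apery m : ℚ)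
      = (2 * (m : ℚ) + 3) * (17 * (m : ℚ) ^ 2 + 51 * (m : ℚ) + 39) * (apery (m + 1) : ℚ) := by
  rw [apery_eq (m + 2) (m + 3) (by omega), apery_eq (m + 1) (m + 3) (by omega),
      apery_eq m (m + 3) (by omega)]
  have htel : ∑ k ∈ Finset.range (m + 3), (G m (k + 1) - G m k) = G m (m + 3) - G m 0 :=
    Finset.sum_range_sub (G m) (m + 3)
  have hG0 : G m 0 = 0 := rfl
  have hGend : G m (m + 3) = 0 := by
    have z : (m + 1).choose (m + 2) = 0 := Nat.choose_eq_zero_of_lt (by omega)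
    show G m (m + 2 + 1) = 0
    simp [G, z]
  have hsum : ∑ k ∈ Finset.range (m + 3),
      (((m : ℚ) + 2) ^ 3 * Fq (m + 2) k + ((m : ℚ) + 1) ^ 3 * Fq m k
        - (2 * (m : ℚ) + 3) * (17 * (m : ℚ) ^ 2 + 51 * (m : ℚ) + 39) * Fq (m + 1) k) = 0 := by
    rw [Finset.sum_congr rfl fun k _ => aux_term m k, htel, hG0, hGend]; ring
  have hsplit := hsum
  rw [Finset.sum_sub_distrib, Finset.sum_add_distrib, ← Finset.mul_sum, ← Finset.mul_sum,
      ← Finset.mul_sum] at hsplit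
  linarith

theorem apery_telescoped_sum (x : Polynomial ℚ) (n : ℕ) (hn : 1 ≤ n) :
    ∑ k ∈ Finset.range n,
      ((k : ℚ) ^ 3 * x.eval ((k : ℚ) - 2)
        - (2 * (k : ℚ) + 1) * (17 * (k : ℚ) ^ 2 + 17 * k + 5) * x.eval ((k : ℚ) - 1)
        + ((k : ℚ) + 1) ^ 3 * x.eval (k : ℚ)) * (apery k : ℚ)
      = (n : ℚ) ^ 3 *
          (x.eval ((n : ℚ) - 1) * (apery (n - 1) : ℚ) - x.eval ((n : ℚ) - 2) * (apery n : ℚ)) := by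
  induction n, hn using Nat.le_induction with
  | base =>
    have h0 : apery 0 = 1 := by simp [apery]
    have h1 : apery 1 = 5 := by norm_num [apery, Finset.sum_range_succ]
    norm_num [h0, h1]
    ring
  | succ n hn ih =>
    obtain ⟨m, rfl⟩ : ∃ m, n = m + 1 := ⟨n - 1, by omega⟩
    rw [Finset.sum_range_succ, ih]
    have hrec := apery_recur m
    simp only [Nat.add_sub_cancel]
    push_cast
    ring_nf
    ring_nf at hrec
    linear_combination (x.eval ((m : ℚ))) * hrec
end

section
/- For every polynomial x with integer coefficients and every integer n ≥ 1, the integer n^3 divides ∑_{k=0}^{n−1} [ k^3 x(k−2) − (2k+1)(17k^2+17k+5) x(k−1) + (k+1)^3 x(k) ] · A_k, where x is evaluated at the indicated integers (which may be negative). -/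
open Finset Polynomial


/-- summand of the Apéry number -/
def aperyF (n k : ℕ) : ℤ :=
  ((n.choose k : ℤ)) ^ 2 * (((n + k).choose k : ℤ)) ^ 2

/-- Zeilberger certificate -/
def aperyG (n k : ℕ) : ℤ :=
  4 * (2 * (n:ℤ) + 1) * ((k:ℤ) * (2 * k + 1) - (2 * (n:ℤ) + 1) ^ 2) * aperyF n k

lemma cert0 (m : ℕ) :
    ((m:ℤ)+2)^3 * aperyF (m+2) 0
      - (2*(m:ℤ)+3)*(17*(m:ℤ)^2+51*m+39) * aperyF (m+1) 0
      + ((m:ℤ)+1)^3 * aperyF m 0 = aperyG (m+1) 0 := by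
  simp [aperyF, aperyG]
  ring

lemma certS (m j : ℕ) :
    ((m:ℤ)+2)^3 * aperyF (m+2) (j+1)
      - (2*(m:ℤ)+3)*(17*(m:ℤ)^2+51*m+39) * aperyF (m+1) (j+1)
      + ((m:ℤ)+1)^3 * aperyF m (j+1)
    = aperyG (m+1) (j+1) - aperyG (m+1) j := by
  rcases le_or_gt j m with hj | hj
  · -- generic case j ≤ m : work in ℚ
    simp only [aperyG, aperyF]
    simp only [show m+2+(j+1) = m+j+3 from by omega, show m+1+(j+1) = m+j+2 from by omega,
      show m+(j+1) = m+j+1 from by omega, show m+1+j = m+j+1 from by omega]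
    have hJ : ((j:ℚ)) ≤ (m:ℚ) := by exact_mod_cast hj
    have hne1 : ((m:ℚ)+1-(j:ℚ)) ≠ 0 := by linarith
    have hne2 : ((m:ℚ)+2) ≠ 0 := by positivity
    have hne3 : ((m:ℚ)+1) ≠ 0 := by positivity
    have hne4 : ((m:ℚ)+(j:ℚ)+3) ≠ 0 := by positivity
    have hne5 : ((m:ℚ)+(j:ℚ)+2) ≠ 0 := by positivity
    have e1 : (((m+2).choose (j+1) : ℚ)) * ((m:ℚ)+1-(j:ℚ)) = ((m+1).choose (j+1) : ℚ) * ((m:ℚ)+2) := by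
      have h := Nat.choose_mul_succ_eq (m+1) (j+1)
      have h2 : m+1+1 - (j+1) = m - j + 1 := by omega
      rw [h2] at h
      have h3 : ((m - j : ℕ) : ℚ) = (m:ℚ) - j := by
        push_cast [Nat.cast_sub hj]; ring
      have h4 : ((m+1).choose (j+1) * (m+1+1) : ℚ) = ((m+1+1).choose (j+1) : ℚ) * ((m-j:ℕ)+1) := by
        exact_mod_cast congrArg (Nat.cast : ℕ → ℚ) h
      rw [h3] at h4
      push_cast at h4 ⊢
      linarith [h4]
    have e2 : (((m+j+3).choose (j+1) : ℚ)) * ((m:ℚ)+2) = ((m+j+2).choose (j+1) : ℚ) * ((m:ℚ)+(j:ℚ)+3) := by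
      have h := Nat.choose_mul_succ_eq (m+j+2) (j+1)
      have h2 : m+j+2+1 - (j+1) = m + 2 := by omega
      rw [h2] at h
      have h4 : ((m+j+2).choose (j+1) * (m+j+2+1) : ℚ) = ((m+j+2+1).choose (j+1) : ℚ) * ((m:ℚ)+2) := by
        exact_mod_cast congrArg (Nat.cast : ℕ → ℚ) h
      have h5 : m+j+2+1 = m+j+3 := by omega
      rw [h5] at h4
      push_cast at h4 ⊢
      linarith [h4]
    have e3 : ((m.choose (j+1) : ℚ)) * ((m:ℚ)+1) = ((m+1).choose (j+1) : ℚ) * ((m:ℚ)-(j:ℚ)) := by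
      have h := Nat.choose_mul_succ_eq m (j+1)
      have h2 : m+1 - (j+1) = m - j := by omega
      rw [h2] at h
      have h3 : ((m - j : ℕ) : ℚ) = (m:ℚ) - j := by
        push_cast [Nat.cast_sub hj]; ring
      have h4 : ((m.choose (j+1)) * (m+1) : ℚ) = ((m+1).choose (j+1) : ℚ) * ((m-j:ℕ)) := by
        exact_mod_cast congrArg (Nat.cast : ℕ → ℚ) h
      rw [h3] at h4
      push_cast at h4 ⊢
      linarith [h4]
    have e4 : (((m+j+2).choose (j+1) : ℚ)) * ((m:ℚ)+(j:ℚ)+2) = ((m+j+2).choose (j+1) : ℚ) * ((m:ℚ)+(j:ℚ)+2) := by rfl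
    have e4' : (((m+j+1).choose (j+1) : ℚ)) * ((m:ℚ)+(j:ℚ)+2) = ((m+j+2).choose (j+1) : ℚ) * ((m:ℚ)+1) := by
      have h := Nat.choose_mul_succ_eq (m+j+1) (j+1)
      have h2 : m+j+1+1 - (j+1) = m + 1 := by omega
      rw [h2] at h
      have h4 : ((m+j+1).choose (j+1) * (m+j+1+1) : ℚ) = ((m+j+1+1).choose (j+1) : ℚ) * ((m:ℚ)+1) := by
        exact_mod_cast congrArg (Nat.cast : ℕ → ℚ) h
      have h5 : m+j+1+1 = m+j+2 := by omega
      rw [h5] at h4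
      push_cast at h4 ⊢
      linarith [h4]
    have e5 : (((m+1).choose j : ℚ)) * ((m:ℚ)+1-(j:ℚ)) = ((m+1).choose (j+1) : ℚ) * ((j:ℚ)+1) := by
      have h := Nat.choose_succ_right_eq (m+1) j
      have h2 : m+1 - j = m - j + 1 := by omega
      rw [h2] at h
      have h3 : ((m - j : ℕ) : ℚ) = (m:ℚ) - j := by
        push_cast [Nat.cast_sub hj]; ring
      have h4 : ((m+1).choose (j+1) * (j+1) : ℚ) = ((m+1).choose j : ℚ) * ((m-j:ℕ)+1) := by
        exact_mod_cast congrArg (Nat.cast : ℕ → ℚ) h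
      rw [h3] at h4
      push_cast at h4 ⊢
      linarith [h4]
    have e6 : (((m+j+1).choose j : ℚ)) * ((m:ℚ)+(j:ℚ)+2) = ((m+j+2).choose (j+1) : ℚ) * ((j:ℚ)+1) := by
      have h := Nat.add_one_mul_choose_eq (m+j+1) j
      have h4 : ((m+j+1+1) * (m+j+1).choose j : ℚ) = ((m+j+1+1).choose (j+1) : ℚ) * ((j:ℚ)+1) := by
        exact_mod_cast congrArg (Nat.cast : ℕ → ℚ) h
      have h5 : m+j+1+1 = m+j+2 := by omega
      rw [h5] at h4
      push_cast at h4 ⊢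
      linarith [h4]
    -- solve for each choose
    have d1 : (((m+2).choose (j+1) : ℚ)) = ((m+1).choose (j+1) : ℚ) * ((m:ℚ)+2) / ((m:ℚ)+1-(j:ℚ)) := by
      rw [eq_div_iff hne1]; exact e1
    have d2 : (((m+j+3).choose (j+1) : ℚ)) = ((m+j+2).choose (j+1) : ℚ) * ((m:ℚ)+(j:ℚ)+3) / ((m:ℚ)+2) := by
      rw [eq_div_iff hne2]; exact e2
    have d3 : ((m.choose (j+1) : ℚ)) = ((m+1).choose (j+1) : ℚ) * ((m:ℚ)-(j:ℚ)) / ((m:ℚ)+1) := by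
      rw [eq_div_iff hne3]; exact e3
    have d4 : (((m+j+1).choose (j+1) : ℚ)) = ((m+j+2).choose (j+1) : ℚ) * ((m:ℚ)+1) / ((m:ℚ)+(j:ℚ)+2) := by
      rw [eq_div_iff hne5]; exact e4'
    have d5 : (((m+1).choose j : ℚ)) = ((m+1).choose (j+1) : ℚ) * ((j:ℚ)+1) / ((m:ℚ)+1-(j:ℚ)) := by
      rw [eq_div_iff hne1]; exact e5
    have d6 : (((m+j+1).choose j : ℚ)) = ((m+j+2).choose (j+1) : ℚ) * ((j:ℚ)+1) / ((m:ℚ)+(j:ℚ)+2) := by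
      rw [eq_div_iff hne5]; exact e6
    qify
    rw [d1, d2, d3, d4, d5, d6]
    field_simp
    ring
  · rcases (show j = m+1 ∨ m+2 ≤ j from by omega) with rfl | hj2
    · simp only [aperyG, aperyF]
      rw [Nat.choose_eq_zero_of_lt (show m+1 < m+1+1 from by omega),
        Nat.choose_eq_zero_of_lt (show m < m+1+1 from by omega),
        Nat.choose_self (m+2), Nat.choose_self (m+1)]
      have h := Nat.succ_mul_centralBinom_succ (m+1)
      simp only [Nat.centralBinom] at h
      have hc : ((m:ℤ)+2) * ((2*(m+2)).choose (m+2) : ℤ) = 2*(2*(m:ℤ)+3) * ((2*(m+1)).choose (m+1) : ℤ) := by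
        have := congrArg (Nat.cast : ℕ → ℤ) h
        push_cast at this
        linarith [this]
      rw [show m+2+(m+1+1) = 2*(m+2) from by omega, show m+1+(m+1) = 2*(m+1) from by omega,
        show m+1+1 = m+2 from by omega]
      push_cast
      push_cast at hc
      linear_combination ((m:ℤ)+2) * (((m:ℤ)+2)*(((2*(m+2)).choose (m+2) : ℤ)) + 2*(2*(m:ℤ)+3)*(((2*(m+1)).choose (m+1) : ℤ))) * hc
    · simp only [aperyG, aperyF]
      rw [Nat.choose_eq_zero_of_lt (show m+2 < j+1 from by omega),
        Nat.choose_eq_zero_of_lt (show m+1 < j+1 from by omega),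
        Nat.choose_eq_zero_of_lt (show m < j+1 from by omega),
        Nat.choose_eq_zero_of_lt (show m+1 < j from by omega)]
      push_cast
      ring

lemma apery_rec (m : ℕ) :
    ((m:ℤ)+2)^3 * apery (m+2)
      = (2*(m:ℤ)+3)*(17*(m:ℤ)^2+51*m+39) * apery (m+1) - ((m:ℤ)+1)^3 * apery m := by
  have hsum : ∑ k ∈ Finset.range (m+3),
      (((m:ℤ)+2)^3 * aperyF (m+2) k
        - (2*(m:ℤ)+3)*(17*(m:ℤ)^2+51*m+39) * aperyF (m+1) k
        + ((m:ℤ)+1)^3 * aperyF m k) = 0 := by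
    rw [Finset.sum_range_succ' _ (m+2)]
    rw [Finset.sum_congr rfl (fun k _ => certS m k)]
    rw [Finset.sum_range_sub (fun k => aperyG (m+1) k)]
    rw [cert0 m]
    have hG : aperyG (m+1) (m+2) = 0 := by
      simp [aperyG, aperyF, Nat.choose_eq_zero_of_lt (show m+1 < m+2 from by omega)]
    rw [hG]
    ring
  have h1 : ∑ k ∈ Finset.range (m+3), aperyF (m+2) k = apery (m+2) := rfl
  have h2 : ∑ k ∈ Finset.range (m+3), aperyF (m+1) k = apery (m+1) := by
    rw [Finset.sum_range_succ]
    have hz : aperyF (m+1) (m+2) = 0 := by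
      simp [aperyF, Nat.choose_eq_zero_of_lt (show m+1 < m+2 from by omega)]
    rw [hz, add_zero]
    rfl
  have h3 : ∑ k ∈ Finset.range (m+3), aperyF m k = apery m := by
    rw [Finset.sum_range_succ, Finset.sum_range_succ]
    have hz1 : aperyF m (m+2) = 0 := by
      simp [aperyF, Nat.choose_eq_zero_of_lt (show m < m+2 from by omega)]
    have hz2 : aperyF m (m+1) = 0 := by
      simp [aperyF, Nat.choose_eq_zero_of_lt (show m < m+1 from by omega)]
    rw [hz1, hz2, add_zero, add_zero]
    rfl
  rw [Finset.sum_add_distrib, Finset.sum_sub_distrib, ← Finset.mul_sum, ← Finset.mul_sum,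
    ← Finset.mul_sum, h1, h2, h3] at hsum
  linarith

lemma keysum (x : Polynomial ℤ) (m : ℕ) :
    ∑ k ∈ Finset.range (m+1),
      ((k : ℤ) ^ 3 * x.eval ((k : ℤ) - 2)
        - (2 * (k : ℤ) + 1) * (17 * (k : ℤ) ^ 2 + 17 * k + 5) * x.eval ((k : ℤ) - 1)
        + ((k : ℤ) + 1) ^ 3 * x.eval (k : ℤ)) * apery k
    = ((m:ℤ)+1)^3 * (x.eval (m:ℤ) * apery m - x.eval ((m:ℤ)-1) * apery (m+1)) := by
  induction m with
  | zero =>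
    have h0 : apery 0 = 1 := by simp [apery]
    have h1 : apery 1 = 5 := by norm_num [apery, Finset.sum_range_succ]
    rw [Finset.sum_range_one]
    norm_num [h0, h1]
    ring
  | succ m ih =>
    rw [Finset.sum_range_succ, ih]
    push_cast
    rw [show (m:ℤ)+1-2 = (m:ℤ)-1 from by ring, show (m:ℤ)+1-1 = (m:ℤ) from by ring,
      show m+1+1 = m+2 from rfl]
    linear_combination x.eval (m:ℤ) * apery_rec m

theorem apery_sum_divisible (x : Polynomial ℤ) (n : ℕ) (hn : 1 ≤ n) :
    (n : ℤ) ^ 3 ∣ ∑ k ∈ Finset.range n,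
      ((k : ℤ) ^ 3 * x.eval ((k : ℤ) - 2)
        - (2 * (k : ℤ) + 1) * (17 * (k : ℤ) ^ 2 + 17 * k + 5) * x.eval ((k : ℤ) - 1)
        + ((k : ℤ) + 1) ^ 3 * x.eval (k : ℤ)) * apery k := by
  obtain ⟨m, rfl⟩ : ∃ m, n = m + 1 := ⟨n - 1, by omega⟩
  rw [keysum x m]
  have hc : ((m+1:ℕ):ℤ) = (m:ℤ)+1 := by push_cast; ring
  rw [hc]
  exact dvd_mul_right _ _
end

section
/- For every s ∈ ℕ there exist integers e_1, e_2, …, e_{⌊(s+3)/2⌋} such that the polynomial identity 2 k^3 (2k−1)^s − 2(2k+1)(17k^2+17k+5)(2k+1)^s + 2(k+1)^3 (2k+3)^s = −8 (2k+1)^{s+3} + ∑_{j=1}^{⌊(s+3)/2⌋} e_j (2k+1)^{s+3−2j} holds in ℤ[k]. -/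
open Finset Polynomial

/-- The pair of polynomials (in the variable `u = 2k+1`) representing
`2·(2k³(2k-1)^s + 2(k+1)³(2k+3)^s)` and `2·(-2k³(2k-1)^s + 2(k+1)³(2k+3)^s)`. -/
noncomputable def aperyPQ : ℕ → Polynomial ℤ × Polynomial ℤ :=
  fun s => Nat.rec (X ^ 3 + C 3 * X, C 3 * X ^ 2 + 1)
    (fun _ p => (X * p.1 + 2 * p.2, X * p.2 + 2 * p.1)) s

lemma aperyPQ_zero : aperyPQ 0 = (X ^ 3 + C 3 * X, C 3 * X ^ 2 + 1) := rfl

lemma aperyPQ_succ (s : ℕ) :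
    aperyPQ (s + 1) =
      (X * (aperyPQ s).1 + 2 * (aperyPQ s).2, X * (aperyPQ s).2 + 2 * (aperyPQ s).1) := rfl

lemma coeff_two_mul (q : Polynomial ℤ) (m : ℕ) :
    ((2 : Polynomial ℤ) * q).coeff m = 2 * q.coeff m := by
  rw [show (2 : Polynomial ℤ) = C 2 by norm_num, coeff_C_mul]

lemma aperyPQ_props (s : ℕ) :
    ((aperyPQ s).1.coeff (s + 3) = 1) ∧
    (∀ m, s + 3 < m → (aperyPQ s).1.coeff m = 0) ∧
    (∀ m, m % 2 ≠ (s + 3) % 2 → (aperyPQ s).1.coeff m = 0) ∧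
    Odd ((aperyPQ s).1.coeff (s + 1)) ∧
    (∀ m, m ≠ s + 1 → m ≠ s + 3 → Even ((aperyPQ s).1.coeff m)) ∧
    (∀ m, s + 2 < m → (aperyPQ s).2.coeff m = 0) ∧
    (∀ m, m % 2 ≠ (s + 2) % 2 → (aperyPQ s).2.coeff m = 0) := by
  induction s with
  | zero =>
      have c1 : ∀ m, (aperyPQ 0).1.coeff m =
          (if m = 3 then 1 else 0) + 3 * (if 1 = m then 1 else 0) := by
        intro m
        show ((X : Polynomial ℤ) ^ 3 + C 3 * X).coeff m = _
        rw [coeff_add, coeff_X_pow, coeff_C_mul, coeff_X]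
      have c2 : ∀ m, (aperyPQ 0).2.coeff m =
          3 * (if m = 2 then 1 else 0) + (if m = 0 then 1 else 0) := by
        intro m
        show ((C 3 : Polynomial ℤ) * X ^ 2 + 1).coeff m = _
        rw [coeff_add, coeff_C_mul, coeff_X_pow, coeff_one]
      refine ⟨?_, ?_, ?_, ?_, ?_, ?_, ?_⟩
      · rw [c1]; norm_num
      · intro m hm; rw [c1, if_neg (by omega), if_neg (by omega)]; ring
      · intro m hm; rw [c1, if_neg (by omega), if_neg (by omega)]; ring
      · rw [c1]; norm_num
      · intro m h1 h3; rw [c1, if_neg (by omega), if_neg (by omega)]; norm_num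
      · intro m hm; rw [c2, if_neg (by omega), if_neg (by omega)]; ring
      · intro m hm; rw [c2, if_neg (by omega), if_neg (by omega)]; ring
  | succ s ih =>
      obtain ⟨hP1, hP2, hP3, hP4, hP5, hQ2, hQ3⟩ := ih
      have cP : ∀ m, (aperyPQ (s + 1)).1.coeff m =
          (if m = 0 then 0 else (aperyPQ s).1.coeff (m - 1)) + 2 * (aperyPQ s).2.coeff m := by
        intro m
        rw [aperyPQ_succ]
        show (X * (aperyPQ s).1 + 2 * (aperyPQ s).2).coeff m = _
        rw [coeff_add, coeff_two_mul]
        cases m with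
        | zero => simp [mul_coeff_zero]
        | succ m => simp [coeff_X_mul]
      have cQ : ∀ m, (aperyPQ (s + 1)).2.coeff m =
          (if m = 0 then 0 else (aperyPQ s).2.coeff (m - 1)) + 2 * (aperyPQ s).1.coeff m := by
        intro m
        rw [aperyPQ_succ]
        show (X * (aperyPQ s).2 + 2 * (aperyPQ s).1).coeff m = _
        rw [coeff_add, coeff_two_mul]
        cases m with
        | zero => simp [mul_coeff_zero]
        | succ m => simp [coeff_X_mul]
      refine ⟨?_, ?_, ?_, ?_, ?_, ?_, ?_⟩
      · rw [cP, if_neg (by omega)]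
        have h : s + 1 + 3 - 1 = s + 3 := by omega
        rw [h, hP1, hQ2 _ (by omega)]; ring
      · intro m hm; rw [cP, if_neg (by omega), hP2 _ (by omega), hQ2 _ (by omega)]; ring
      · intro m hm
        rcases Nat.eq_zero_or_pos m with h0 | h0
        · subst h0; rw [cP, if_pos rfl, hQ3 _ (by omega)]; ring
        · rw [cP, if_neg (by omega), hP3 _ (by omega), hQ3 _ (by omega)]; ring
      · rw [cP, if_neg (by omega)]
        have h : s + 1 + 1 - 1 = s + 1 := by omega
        rw [h]
        exact hP4.add_even (even_two_mul _)
      · intro m h1 h3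
        rw [cP]
        refine Even.add ?_ (even_two_mul _)
        split
        · exact Even.zero
        · exact hP5 _ (by omega) (by omega)
      · intro m hm; rw [cQ, if_neg (by omega), hQ2 _ (by omega), hP2 _ (by omega)]; ring
      · intro m hm
        rcases Nat.eq_zero_or_pos m with h0 | h0
        · subst h0; rw [cQ, if_pos rfl, hP3 _ (by omega)]; ring
        · rw [cQ, if_neg (by omega), hQ3 _ (by omega), hP3 _ (by omega)]; ring

lemma aperyPQ_comp (s : ℕ) :
    (aperyPQ s).1.comp (2 * X + 1) =
      4 * X ^ 3 * (2 * X - 1) ^ s + 4 * (X + 1) ^ 3 * (2 * X + 3) ^ s ∧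
    (aperyPQ s).2.comp (2 * X + 1) =
      -(4 * X ^ 3 * (2 * X - 1) ^ s) + 4 * (X + 1) ^ 3 * (2 * X + 3) ^ s := by
  induction s with
  | zero =>
      constructor
      · show ((X : Polynomial ℤ) ^ 3 + C 3 * X).comp _ = _
        simp only [add_comp, mul_comp, X_comp, X_pow_comp, C_comp, pow_zero]
        ring_nf
        norm_num
        ring
      · show ((C 3 : Polynomial ℤ) * X ^ 2 + 1).comp _ = _
        simp only [add_comp, mul_comp, X_comp, X_pow_comp, C_comp, one_comp, pow_zero]
        ring_nf
        norm_num
        ring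
  | succ s ih =>
      obtain ⟨ih1, ih2⟩ := ih
      constructor
      · show (X * (aperyPQ s).1 + 2 * (aperyPQ s).2).comp _ = _
        rw [add_comp, mul_comp, mul_comp, X_comp, ih1, ih2]
        have h2 : ((2 : Polynomial ℤ)).comp (2 * X + 1) = 2 := by
          norm_num
        rw [h2]
        ring
      · show (X * (aperyPQ s).2 + 2 * (aperyPQ s).1).comp _ = _
        rw [add_comp, mul_comp, mul_comp, X_comp, ih1, ih2]
        have h2 : ((2 : Polynomial ℤ)).comp (2 * X + 1) = 2 := by
          norm_num
        rw [h2]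
        ring

lemma recon (p : Polynomial ℤ) (n : ℕ) (h2 : ∀ m, n < m → p.coeff m = 0)
    (h3 : ∀ m, m % 2 ≠ n % 2 → p.coeff m = 0) :
    p = ∑ j ∈ Finset.range (n / 2 + 1), C (p.coeff (n - 2 * j)) * X ^ (n - 2 * j) := by
  ext m
  rw [finset_sum_coeff]
  simp only [coeff_C_mul, coeff_X_pow, mul_ite, mul_one, mul_zero]
  by_cases hm : m ≤ n ∧ m % 2 = n % 2
  · obtain ⟨h1, hpar⟩ := hm
    rw [Finset.sum_eq_single ((n - m) / 2)]
    · have h : n - 2 * ((n - m) / 2) = m := by omega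
      rw [h, if_pos rfl]
    · intro j hj hne
      have := Finset.mem_range.mp hj
      rw [if_neg (by omega)]
    · intro h
      exact absurd (Finset.mem_range.mpr (by omega)) h
  · have hz : ∀ j ∈ Finset.range (n / 2 + 1),
        (if m = n - 2 * j then p.coeff (n - 2 * j) else 0) = 0 := by
      intro j hj
      have := Finset.mem_range.mp hj
      rw [if_neg (by omega)]
    rw [Finset.sum_eq_zero hz]
    rcases le_or_gt m n with h | h
    · exact h3 m (fun hp => hm ⟨h, hp⟩)
    · exact h2 m h

theorem apery_adjoint_structure (s : ℕ) :
    ∃ e : ℕ → ℤ,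
      2 * Polynomial.X ^ 3 * (2 * Polynomial.X - 1) ^ s
        - 2 * (2 * Polynomial.X + 1) * (17 * Polynomial.X ^ 2 + 17 * Polynomial.X + 5) *
            (2 * Polynomial.X + 1) ^ s
        + 2 * (Polynomial.X + 1) ^ 3 * (2 * Polynomial.X + 3) ^ s
      = (-8 : Polynomial ℤ) * (2 * Polynomial.X + 1) ^ (s + 3)
        + ∑ j ∈ Finset.Icc 1 ((s + 3) / 2),
            Polynomial.C (e j) * (2 * Polynomial.X + 1) ^ (s + 3 - 2 * j) := by
  obtain ⟨hP1, hP2, hP3, hP4, hP5, hQ2, hQ3⟩ := aperyPQ_props s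
  obtain ⟨hc, -⟩ := aperyPQ_comp s
  set R : Polynomial ℤ := (aperyPQ s).1 - C 17 * X ^ (s + 3) - C 3 * X ^ (s + 1) with hR
  have hR2 : ∀ m, s + 3 < m → R.coeff m = 0 := by
    intro m hm
    rw [hR]
    rw [coeff_sub, coeff_sub, coeff_C_mul, coeff_C_mul, coeff_X_pow, coeff_X_pow,
      if_neg (by omega : ¬ m = s + 3), if_neg (by omega : ¬ m = s + 1), hP2 m hm]
    ring
  have hR3 : ∀ m, m % 2 ≠ (s + 3) % 2 → R.coeff m = 0 := by
    intro m hm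
    rw [hR]
    rw [coeff_sub, coeff_sub, coeff_C_mul, coeff_C_mul, coeff_X_pow, coeff_X_pow,
      if_neg (by omega : ¬ m = s + 3), if_neg (by omega : ¬ m = s + 1), hP3 m hm]
    ring
  have hRtop : R.coeff (s + 3) = -16 := by
    rw [hR]
    rw [coeff_sub, coeff_sub, coeff_C_mul, coeff_C_mul, coeff_X_pow, coeff_X_pow,
      if_pos rfl, if_neg (by omega : ¬ s + 3 = s + 1), hP1]
    ring
  have hRev : ∀ j, 1 ≤ j → j ≤ (s + 3) / 2 → Even (R.coeff (s + 3 - 2 * j)) := by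
    intro j h1 hj
    by_cases hj1 : j = 1
    · subst hj1
      have hm : s + 3 - 2 * 1 = s + 1 := by omega
      rw [hm, hR]
      rw [coeff_sub, coeff_sub, coeff_C_mul, coeff_C_mul, coeff_X_pow, coeff_X_pow,
        if_neg (by omega : ¬ s + 1 = s + 3), if_pos rfl]
      obtain ⟨t, ht⟩ := hP4
      exact ⟨t - 1, by rw [ht]; ring⟩
    · have hne1 : s + 3 - 2 * j ≠ s + 1 := by omega
      have hne3 : s + 3 - 2 * j ≠ s + 3 := by omega
      rw [hR]
      rw [coeff_sub, coeff_sub, coeff_C_mul, coeff_C_mul, coeff_X_pow, coeff_X_pow,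
        if_neg hne3, if_neg hne1]
      obtain ⟨t, ht⟩ := hP5 _ hne1 hne3
      exact ⟨t, by rw [ht]; ring⟩
  refine ⟨fun j => R.coeff (s + 3 - 2 * j) / 2, ?_⟩
  apply mul_left_cancel₀ (two_ne_zero' (Polynomial ℤ))
  have key := recon R (s + 3) hR2 hR3
  have hcompR : R.comp (2 * X + 1) =
      ∑ j ∈ Finset.range ((s + 3) / 2 + 1),
        C (R.coeff (s + 3 - 2 * j)) * (2 * X + 1) ^ (s + 3 - 2 * j) := by
    conv_lhs => rw [key]
    simp only [Polynomial.comp, eval₂_finset_sum, eval₂_mul, eval₂_C, eval₂_X_pow]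
  have hL : (2 : Polynomial ℤ) *
      (2 * X ^ 3 * (2 * X - 1) ^ s
        - 2 * (2 * X + 1) * (17 * X ^ 2 + 17 * X + 5) * (2 * X + 1) ^ s
        + 2 * (X + 1) ^ 3 * (2 * X + 3) ^ s) = R.comp (2 * X + 1) := by
    rw [hR, sub_comp, sub_comp, mul_comp, mul_comp, C_comp, C_comp, X_pow_comp, X_pow_comp, hc]
    have c17 : (C (17 : ℤ) : Polynomial ℤ) = 17 := by norm_num
    have c3 : (C (3 : ℤ) : Polynomial ℤ) = 3 := by norm_num
    rw [c17, c3]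
    ring
  rw [hL, hcompR]
  have hsplit : Finset.range ((s + 3) / 2 + 1) = insert 0 (Finset.Icc 1 ((s + 3) / 2)) := by
    ext j
    simp only [Finset.mem_range, Finset.mem_insert, Finset.mem_Icc]
    omega
  rw [hsplit, Finset.sum_insert (by simp)]
  rw [Nat.mul_zero, Nat.sub_zero, hRtop]
  rw [mul_add, Finset.mul_sum]
  congr 1
  · rw [show (C (-16 : ℤ) : Polynomial ℤ) = -16 by norm_num]
    ring
  · apply Finset.sum_congr rfl
    intro j hj
    simp only [Finset.mem_Icc] at hj
    have hdvd : (2 : ℤ) ∣ R.coeff (s + 3 - 2 * j) := (hRev j hj.1 hj.2).two_dvd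
    have hcd : (2 : ℤ) * (R.coeff (s + 3 - 2 * j) / 2) = R.coeff (s + 3 - 2 * j) :=
      Int.mul_ediv_cancel' hdvd
    rw [← mul_assoc,
      show (2 : Polynomial ℤ) * C (R.coeff (s + 3 - 2 * j) / 2) =
        C (2 * (R.coeff (s + 3 - 2 * j) / 2)) by rw [map_mul]; norm_num,
      hcd]
end

section
/- For every s ∈ ℕ there exist integers e_1, e_2, …, e_{⌊(s+3)/2⌋} such that the polynomial identity 2 k^3 (2k−1)^s + 2(2k+1)(17k^2+17k+5)(2k+1)^s + 2(k+1)^3 (2k+3)^s = 9 (2k+1)^{s+3} + ∑_{j=1}^{⌊(s+3)/2⌋} e_j (2k+1)^{s+3−2j} holds in ℤ[k]. -/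
open Finset Polynomial

private noncomputable def Lp (s : ℕ) : Polynomial ℤ :=
  2 * Polynomial.X ^ 3 * (2 * Polynomial.X - 1) ^ s
    + 2 * (2 * Polynomial.X + 1) * (17 * Polynomial.X ^ 2 + 17 * Polynomial.X + 5) *
        (2 * Polynomial.X + 1) ^ s
    + 2 * (Polynomial.X + 1) ^ 3 * (2 * Polynomial.X + 3) ^ s

private def T (n : ℕ) (Q : Polynomial ℤ) : Prop :=
  ∃ e : ℕ → ℤ, Q = ∑ j ∈ Finset.range (n / 2),
    Polynomial.C (e j) * (2 * Polynomial.X + 1) ^ (n - 2 * (j + 1))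

private lemma T_congr {m n : ℕ} {Q : Polynomial ℤ} (h : m = n) (hT : T m Q) : T n Q := h ▸ hT

private lemma T_add {n : ℕ} {Q R : Polynomial ℤ} (hQ : T n Q) (hR : T n R) : T n (Q + R) := by
  obtain ⟨e1, h1⟩ := hQ
  obtain ⟨e2, h2⟩ := hR
  exact ⟨fun j => e1 j + e2 j, by simp [h1, h2, map_add, add_mul, Finset.sum_add_distrib]⟩

private lemma T_smul {n : ℕ} {Q : Polynomial ℤ} (c : ℤ) (hQ : T n Q) :
    T n (Polynomial.C c * Q) := by
  obtain ⟨e, h⟩ := hQ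
  refine ⟨fun j => c * e j, ?_⟩
  simp [h, Finset.mul_sum, map_mul, mul_assoc]

private lemma T_u_mul {n : ℕ} {Q : Polynomial ℤ} (hQ : T n Q) :
    T (n + 1) ((2 * Polynomial.X + 1) * Q) := by
  obtain ⟨e, h⟩ := hQ
  refine ⟨fun j => if j < n / 2 then e j else 0, ?_⟩
  rw [h, Finset.mul_sum]
  rw [← Finset.sum_subset (Finset.range_subset_range.2 (Nat.div_le_div_right (Nat.le_succ n)))]
  · refine Finset.sum_congr rfl fun j hj => ?_
    rw [Finset.mem_range] at hj
    have h2j : 2 * (j + 1) ≤ n := by omega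
    beta_reduce
    rw [if_pos hj]
    have : n + 1 - 2 * (j + 1) = (n - 2 * (j + 1)) + 1 := by omega
    rw [this, pow_succ]
    ring
  · intro j _ hj
    rw [Finset.mem_range] at hj
    beta_reduce
    rw [if_neg hj, map_zero, zero_mul]

private lemma T_up {n : ℕ} {Q : Polynomial ℤ} (hQ : T n Q) : T (n + 2) Q := by
  obtain ⟨e, h⟩ := hQ
  refine ⟨fun j => if j = 0 then 0 else e (j - 1), ?_⟩
  beta_reduce
  have hd : (n + 2) / 2 = n / 2 + 1 := by omega
  rw [hd]
  rw [Finset.sum_range_succ' (fun j => Polynomial.C (if j = 0 then 0 else e (j - 1)) * (2 * Polynomial.X + 1) ^ (n + 2 - 2 * (j + 1))) (n / 2)]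
  norm_num
  rw [h]
  apply Finset.sum_congr rfl
  intro j hj
  rw [Finset.mem_range] at hj
  have h2 : n + 2 - 2 * (j + 1 + 1) = n - 2 * (j + 1) := by omega
  rw [h2]
  simp [Polynomial.C_eq_intCast]

private lemma T_base0 : T 3 (Lp 0 - 9 * (2 * Polynomial.X + 1) ^ (0 + 3)) := by
  refine ⟨fun _ => 3, ?_⟩
  simp only [Lp, Finset.sum_range_one, map_ofNat]
  norm_num
  ring

private lemma T_base1 : T 4 (Lp 1 - 9 * (2 * Polynomial.X + 1) ^ (1 + 3)) := by
  refine ⟨fun j => if j = 0 then 6 else 1, ?_⟩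
  simp only [Lp]
  rw [show (4 : ℕ) / 2 = 2 from rfl, Finset.sum_range_succ, Finset.sum_range_one]
  norm_num
  ring

private lemma T_base2 : T 5 (Lp 2 - 9 * (2 * Polynomial.X + 1) ^ (2 + 3)) := by
  refine ⟨fun j => if j = 0 then 11 else 8, ?_⟩
  simp only [Lp]
  rw [show (5 : ℕ) / 2 = 2 from rfl, Finset.sum_range_succ, Finset.sum_range_one]
  norm_num
  ring

private lemma T_main : ∀ s : ℕ, T (s + 3) (Lp s - 9 * (2 * Polynomial.X + 1) ^ (s + 3)) := by
  have key : ∀ s : ℕ,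
      T (s + 3) (Lp s - 9 * (2 * Polynomial.X + 1) ^ (s + 3)) ∧
      T (s + 1 + 3) (Lp (s + 1) - 9 * (2 * Polynomial.X + 1) ^ (s + 1 + 3)) ∧
      T (s + 2 + 3) (Lp (s + 2) - 9 * (2 * Polynomial.X + 1) ^ (s + 2 + 3)) := by
    intro s
    induction s with
    | zero => exact ⟨T_base0, T_base1, T_base2⟩
    | succ n ih =>
      obtain ⟨h0, h1, h2⟩ := ih
      refine ⟨T_congr (by omega) h1, T_congr (by omega) h2, ?_⟩
      set D0 := Lp n - 9 * (2 * Polynomial.X + 1) ^ (n + 3) with hD0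
      set D1 := Lp (n + 1) - 9 * (2 * Polynomial.X + 1) ^ (n + 1 + 3) with hD1
      set D2 := Lp (n + 2) - 9 * (2 * Polynomial.X + 1) ^ (n + 2 + 3) with hD2
      have hid : Lp (n + 3) - 9 * (2 * Polynomial.X + 1) ^ (n + 3 + 3) =
          Polynomial.C 3 * ((2 * Polynomial.X + 1) * D2)
          + Polynomial.C 4 * D1
          + Polynomial.C (-3) * ((2 * Polynomial.X + 1) * ((2 * Polynomial.X + 1) * D1))
          + (2 * Polynomial.X + 1) * ((2 * Polynomial.X + 1) * ((2 * Polynomial.X + 1) * D0))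
          + Polynomial.C (-4) * ((2 * Polynomial.X + 1) * D0) := by
        simp only [hD0, hD1, hD2, Lp, map_neg, map_ofNat]
        ring
      have p1 : T (n + 6) (Polynomial.C 3 * ((2 * Polynomial.X + 1) * D2)) :=
        T_smul 3 (T_congr (by omega) (T_u_mul h2))
      have p2 : T (n + 6) (Polynomial.C 4 * D1) :=
        T_congr (by omega) (T_up (T_smul 4 h1))
      have p3 : T (n + 6)
          (Polynomial.C (-3) * ((2 * Polynomial.X + 1) * ((2 * Polynomial.X + 1) * D1))) :=
        T_smul (-3) (T_congr (by omega) (T_u_mul (T_u_mul h1)))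
      have p4 : T (n + 6)
          ((2 * Polynomial.X + 1) * ((2 * Polynomial.X + 1) * ((2 * Polynomial.X + 1) * D0))) :=
        T_congr (by omega) (T_u_mul (T_u_mul (T_u_mul h0)))
      have p5 : T (n + 6) (Polynomial.C (-4) * ((2 * Polynomial.X + 1) * D0)) :=
        T_congr (by omega) (T_up (T_smul (-4) (T_u_mul h0)))
      refine T_congr (show n + 6 = n + 1 + 2 + 3 by omega) ?_
      have := T_add (T_add (T_add (T_add p1 p2) p3) p4) p5
      rw [← hid] at this
      exact T_congr rfl (by convert this using 2 <;> omega)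
  exact fun s => (key s).1

theorem apery_alternating_adjoint_structure (s : ℕ) :
    ∃ e : ℕ → ℤ,
      2 * Polynomial.X ^ 3 * (2 * Polynomial.X - 1) ^ s
        + 2 * (2 * Polynomial.X + 1) * (17 * Polynomial.X ^ 2 + 17 * Polynomial.X + 5) *
            (2 * Polynomial.X + 1) ^ s
        + 2 * (Polynomial.X + 1) ^ 3 * (2 * Polynomial.X + 3) ^ s
      = (9 : Polynomial ℤ) * (2 * Polynomial.X + 1) ^ (s + 3)
        + ∑ j ∈ Finset.Icc 1 ((s + 3) / 2),
            Polynomial.C (e j) * (2 * Polynomial.X + 1) ^ (s + 3 - 2 * j) := by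
  obtain ⟨e, h⟩ := T_main s
  refine ⟨fun j => e (j - 1), ?_⟩
  have hsum : ∑ j ∈ Finset.Icc 1 ((s + 3) / 2),
      Polynomial.C (e (j - 1)) * (2 * Polynomial.X + 1) ^ (s + 3 - 2 * j)
      = ∑ j ∈ Finset.range ((s + 3) / 2),
      Polynomial.C (e j) * (2 * Polynomial.X + 1) ^ (s + 3 - 2 * (j + 1)) := by
    rw [show Finset.Icc 1 ((s + 3) / 2) = Finset.Ico 1 ((s + 3) / 2 + 1) by
      rw [Finset.Ico_add_one_right_eq_Icc], Finset.sum_Ico_eq_sum_range]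
    refine Finset.sum_congr (by norm_num) fun j _ => ?_
    have e1 : 1 + j - 1 = j := by omega
    have e2 : s + 3 - 2 * (1 + j) = s + 3 - 2 * (j + 1) := by omega
    rw [e1, e2]
  rw [hsum, ← h]
  have : Lp s = 2 * Polynomial.X ^ 3 * (2 * Polynomial.X - 1) ^ s
        + 2 * (2 * Polynomial.X + 1) * (17 * Polynomial.X ^ 2 + 17 * Polynomial.X + 5) *
            (2 * Polynomial.X + 1) ^ s
        + 2 * (Polynomial.X + 1) ^ 3 * (2 * Polynomial.X + 3) ^ s := rfl
  rw [← this]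
  ring
end

section
/- For every z ∈ ℤ and every k ∈ ℕ, the central Delannoy polynomials satisfy the recurrence (k+2) · D_{k+2}(z) = (2k+3)(2z+1) · D_{k+1}(z) − (k+1) · D_k(z). -/
open Finset

/-- The central Delannoy polynomials `D k (z) = ∑_{i=0}^k (k choose i) ((k+i) choose i) z^i`. -/
def delannoy (k : ℕ) (z : ℤ) : ℤ :=
  ∑ i ∈ Finset.range (k + 1), (k.choose i : ℤ) * ((k + i).choose i : ℤ) * z ^ i

-- generic case helper over ℚ
lemma qgen (j m : ℕ) :
    ((j:ℚ)+m+3) * (((j+1)+(m+2)).choose (j+1)) * (((j+1)+(j+m+3)).choose (j+1))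
      + ((j:ℚ)+m+2) * (((j+1)+m).choose (j+1)) * (((j+1)+(j+m+1)).choose (j+1))
    = (2*(j:ℚ)+2*m+5) * (((j+1)+(m+1)).choose (j+1)) * (((j+1)+(j+m+2)).choose (j+1))
      + 2*(2*(j:ℚ)+2*m+5) * ((j+(m+2)).choose j) * ((j+(j+m+2)).choose j) := by
  rw [Nat.cast_add_choose, Nat.cast_add_choose, Nat.cast_add_choose, Nat.cast_add_choose,
      Nat.cast_add_choose, Nat.cast_add_choose, Nat.cast_add_choose, Nat.cast_add_choose]
  rw [show (j+1)+(m+2) = j+m+3 by omega, show (j+1)+(j+m+3) = 2*j+m+4 by omega,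
      show (j+1)+m = j+m+1 by omega, show (j+1)+(j+m+1) = 2*j+m+2 by omega,
      show (j+1)+(m+1) = j+m+2 by omega, show (j+1)+(j+m+2) = 2*j+m+3 by omega,
      show j+(m+2) = j+m+2 by omega, show j+(j+m+2) = 2*j+m+2 by omega]
  have h1 : ((j.factorial : ℚ)) ≠ 0 := by exact_mod_cast (Nat.factorial_pos j).ne'
  have h2 : ((m.factorial : ℚ)) ≠ 0 := by exact_mod_cast (Nat.factorial_pos m).ne'
  have h3 : (((j+m).factorial : ℚ)) ≠ 0 := by exact_mod_cast (Nat.factorial_pos (j+m)).ne'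
  have h4 : (((2*j+m).factorial : ℚ)) ≠ 0 := by exact_mod_cast (Nat.factorial_pos (2*j+m)).ne'
  have hj1 : ((j:ℚ)+1) ≠ 0 := by positivity
  simp only [Nat.factorial_succ]
  field_simp
  push_cast
  ring

-- case j = k over ℚ
lemma qb (k : ℕ) :
    ((k:ℚ)+2) * (((k+1)+1).choose (k+1)) * (((k+1)+(k+2)).choose (k+1))
    = (2*(k:ℚ)+3) * (((k+1)+0).choose (k+1)) * (((k+1)+(k+1)).choose (k+1))
      + 2*(2*(k:ℚ)+3) * ((k+1).choose k) * ((k+(k+1)).choose k) := by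
  rw [show (k+1 : ℕ) = k + 1 from rfl]
  rw [Nat.cast_add_choose, Nat.cast_add_choose, Nat.cast_add_choose, Nat.cast_add_choose,
      Nat.cast_add_choose]
  rw [show (k+1)+1 = k+2 by omega, show (k+1)+(k+2) = 2*k+3 by omega,
      show (k+1)+0 = k+1 by omega, show (k+1)+(k+1) = 2*k+2 by omega,
      show k+(k+1) = 2*k+1 by omega]
  have h1 : ((k.factorial : ℚ)) ≠ 0 := by exact_mod_cast (Nat.factorial_pos k).ne'
  have h4 : (((2*k).factorial : ℚ)) ≠ 0 := by exact_mod_cast (Nat.factorial_pos (2*k)).ne'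
  have hj1 : ((k:ℚ)+1) ≠ 0 := by positivity
  simp only [Nat.factorial_succ, Nat.factorial_zero, Nat.choose_self]
  field_simp
  push_cast
  ring

-- case j = k+1 over ℚ
lemma qc (k : ℕ) :
    ((k:ℚ)+2) * (((k+2)+(k+2)).choose (k+2))
    = 2*(2*(k:ℚ)+3) * (((k+1)+(k+1)).choose (k+1)) := by
  rw [Nat.cast_add_choose, Nat.cast_add_choose]
  rw [show (k+2)+(k+2) = 2*k+4 by omega, show (k+1)+(k+1) = 2*k+2 by omega]
  have h4 : (((2*k).factorial : ℚ)) ≠ 0 := by exact_mod_cast (Nat.factorial_pos (2*k)).ne'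
  have h1 : ((k.factorial : ℚ)) ≠ 0 := by exact_mod_cast (Nat.factorial_pos k).ne'
  have hj1 : ((k:ℚ)+1) ≠ 0 := by positivity
  simp only [Nat.factorial_succ]
  field_simp
  push_cast
  ring

-- the coefficient identity over ℤ, in the exact shapes appearing in the sums
lemma coeff_key (k j : ℕ) (hj : j ≤ k + 1) :
    ((k:ℤ)+2) * ((k+2).choose (j+1)) * ((k+2+(j+1)).choose (j+1))
      + ((k:ℤ)+1) * (k.choose (j+1)) * ((k+(j+1)).choose (j+1))
    = (2*(k:ℤ)+3) * ((k+1).choose (j+1)) * ((k+1+(j+1)).choose (j+1))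
      + 2*(2*(k:ℤ)+3) * ((k+1).choose j) * ((k+1+j).choose j) := by
  rcases Nat.lt_or_ge j k with h | h
  · -- j + 1 ≤ k
    obtain ⟨m, rfl⟩ := Nat.exists_eq_add_of_le (Nat.succ_le_of_lt h)
    have e2 : (j+1+m+2+(j+1)).choose (j+1) = ((j+1)+(j+m+3)).choose (j+1) := by
      rw [show j+1+m+2+(j+1) = (j+1)+(j+m+3) by omega]
    have e1 : (j+1+m+2).choose (j+1) = ((j+1)+(m+2)).choose (j+1) := by
      rw [show j+1+m+2 = (j+1)+(m+2) by omega]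
    have e4 : (j+1+m+(j+1)).choose (j+1) = ((j+1)+(j+m+1)).choose (j+1) := by
      rw [show j+1+m+(j+1) = (j+1)+(j+m+1) by omega]
    have e6 : (j+1+m+1+(j+1)).choose (j+1) = ((j+1)+(j+m+2)).choose (j+1) := by
      rw [show j+1+m+1+(j+1) = (j+1)+(j+m+2) by omega]
    have e5 : (j+1+m+1).choose (j+1) = ((j+1)+(m+1)).choose (j+1) := by
      rw [show j+1+m+1 = (j+1)+(m+1) by omega]
    have e8 : (j+1+m+1+j).choose j = (j+(j+m+2)).choose j := by
      rw [show j+1+m+1+j = j+(j+m+2) by omega]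
    have e7 : (j+1+m+1).choose j = (j+(m+2)).choose j := by
      rw [show j+1+m+1 = j+(m+2) by omega]
    rw [e2, e1, e4, e6, e5, e8, e7]
    have h := qgen j m
    qify
    linear_combination h
  · rcases Nat.lt_or_ge j (k+1) with h' | h'
    · -- j = k
      have hjk : j = k := by omega
      subst hjk
      have hz : j.choose (j+1) = 0 := Nat.choose_succ_self j
      have e1 : (j+2).choose (j+1) = ((j+1)+1).choose (j+1) := by
        rw [show j+2 = (j+1)+1 by omega]
      have e2 : (j+2+(j+1)).choose (j+1) = ((j+1)+(j+2)).choose (j+1) := by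
        rw [show j+2+(j+1) = (j+1)+(j+2) by omega]
      have e3 : (j+1).choose (j+1) = ((j+1)+0).choose (j+1) := by
        rw [show (j+1)+0 = j+1 by omega]
      have e5 : (j+1+j).choose j = (j+(j+1)).choose j := by
        rw [show j+1+j = j+(j+1) by omega]
      rw [hz, e1, e2, e3, e5]
      have h := qb j
      qify
      linear_combination h
    · -- j = k+1
      have hjk : j = k + 1 := by omega
      subst hjk
      rw [show k+1+1 = k+2 by omega]
      have hz1 : k.choose (k+2) = 0 := Nat.choose_eq_zero_of_lt (by omega)
      have hz2 : (k+1).choose (k+2) = 0 := Nat.choose_eq_zero_of_lt (by omega)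
      rw [hz1, hz2, Nat.choose_self, Nat.choose_self]
      have h := qc k
      qify
      linear_combination h

theorem delannoy_recurrence (z : ℤ) (k : ℕ) :
    ((k : ℤ) + 2) * delannoy (k + 2) z
      = (2 * (k : ℤ) + 3) * (2 * z + 1) * delannoy (k + 1) z - ((k : ℤ) + 1) * delannoy k z := by
  have main :
      ∑ i ∈ range (k+3), (((k:ℤ)+2) * ((k+2).choose i) * ((k+2+i).choose i) * z^i
          + ((k:ℤ)+1) * (k.choose i) * ((k+i).choose i) * z^i)
        = (∑ i ∈ range (k+3), (2*(k:ℤ)+3) * ((k+1).choose i) * ((k+1+i).choose i) * z^i)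
          + ∑ i ∈ range (k+2), 2*(2*(k:ℤ)+3) * ((k+1).choose i) * ((k+1+i).choose i) * z^(i+1) := by
    rw [show k+3 = (k+2)+1 by omega, Finset.sum_range_succ', Finset.sum_range_succ'
      (fun i => (2*(k:ℤ)+3) * ((k+1).choose i) * ((k+1+i).choose i) * z^i) (k+2)]
    have hs : ∑ i ∈ range (k+2),
        (((k:ℤ)+2) * ((k+2).choose (i+1)) * ((k+2+(i+1)).choose (i+1)) * z^(i+1)
          + ((k:ℤ)+1) * (k.choose (i+1)) * ((k+(i+1)).choose (i+1)) * z^(i+1))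
        = ∑ i ∈ range (k+2),
          ((2*(k:ℤ)+3) * ((k+1).choose (i+1)) * ((k+1+(i+1)).choose (i+1)) * z^(i+1)
            + 2*(2*(k:ℤ)+3) * ((k+1).choose i) * ((k+1+i).choose i) * z^(i+1)) := by
      refine Finset.sum_congr rfl fun i hi => ?_
      have h := coeff_key k i (by simp at hi; omega)
      linear_combination h * z^(i+1)
    rw [hs, Finset.sum_add_distrib]
    simp [Nat.choose_zero_right]
    ring
  have L1 : ((k:ℤ)+2) * delannoy (k+2) z
      = ∑ i ∈ range (k+3), ((k:ℤ)+2) * ((k+2).choose i) * ((k+2+i).choose i) * z^i := by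
    rw [delannoy, Finset.mul_sum]
    exact Finset.sum_congr (by rw [show k+2+1 = k+3 by omega]) (fun i _ => by ring)
  have L2 : ((k:ℤ)+1) * delannoy k z
      = ∑ i ∈ range (k+3), ((k:ℤ)+1) * (k.choose i) * ((k+i).choose i) * z^i := by
    rw [delannoy, Finset.mul_sum]
    calc ∑ i ∈ range (k+1), ((k:ℤ)+1) * ((k.choose i : ℤ) * ((k+i).choose i : ℤ) * z^i)
        = ∑ i ∈ range (k+1), ((k:ℤ)+1) * (k.choose i) * ((k+i).choose i) * z^i :=
          Finset.sum_congr rfl (fun i _ => by ring)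
      _ = ∑ i ∈ range (k+3), ((k:ℤ)+1) * (k.choose i) * ((k+i).choose i) * z^i := by
          refine Finset.sum_subset (Finset.range_subset_range.2 (by omega)) fun x hx hxs => ?_
          have hkx : k < x := by simp at hxs; omega
          rw [Nat.choose_eq_zero_of_lt hkx]
          push_cast
          ring
  have R1 : (2*(k:ℤ)+3) * (2*z+1) * delannoy (k+1) z
      = (∑ i ∈ range (k+3), (2*(k:ℤ)+3) * ((k+1).choose i) * ((k+1+i).choose i) * z^i)
        + ∑ i ∈ range (k+2), 2*(2*(k:ℤ)+3) * ((k+1).choose i) * ((k+1+i).choose i) * z^(i+1) := by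
    rw [delannoy, Finset.mul_sum]
    calc ∑ i ∈ range (k+1+1), (2*(k:ℤ)+3)*(2*z+1) * (((k+1).choose i : ℤ) * (((k+1)+i).choose i : ℤ) * z^i)
        = ∑ i ∈ range (k+2), ((2*(k:ℤ)+3) * ((k+1).choose i) * ((k+1+i).choose i) * z^i
            + 2*(2*(k:ℤ)+3) * ((k+1).choose i) * ((k+1+i).choose i) * z^(i+1)) := by
          refine Finset.sum_congr (by rw [show k+1+1 = k+2 by omega]) fun i _ => ?_
          ring
      _ = (∑ i ∈ range (k+2), (2*(k:ℤ)+3) * ((k+1).choose i) * ((k+1+i).choose i) * z^i)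
          + ∑ i ∈ range (k+2), 2*(2*(k:ℤ)+3) * ((k+1).choose i) * ((k+1+i).choose i) * z^(i+1) :=
          Finset.sum_add_distrib
      _ = _ := by
          congr 1
          refine Finset.sum_subset (Finset.range_subset_range.2 (by omega)) fun x hx hxs => ?_
          have hkx : k + 1 < x := by simp at hxs; omega
          rw [Nat.choose_eq_zero_of_lt hkx]
          push_cast
          ring
  rw [Finset.sum_add_distrib] at main
  linarith [main, L1, L2, R1]
end

section
/- Fix z ∈ ℤ. For every polynomial x with rational coefficients and every integer n ≥ 1, ∑_{k=0}^{n−1} [ k x(k−2) − (2k+1)(2z+1) x(k−1) + (k+1) x(k) ] · D_k(z) = n · ( x(n−1) D_{n−1}(z) − x(n−2) D_n(z) ), where x is evaluated at the indicated integers (which may be negative). -/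
open Finset Polynomial

section
open Nat

lemma delannoy_aux_fact_ne (n : ℕ) : ((n ! : ℚ)) ≠ 0 := by
  exact_mod_cast (Nat.factorial_pos n).ne'

lemma delannoy_coeffQ (m j : ℕ) :
    ((m:ℚ)+2) * ((m+2).choose (j+1)) * ((m+3+j).choose (j+1))
      + ((m:ℚ)+1) * (m.choose (j+1)) * ((m+1+j).choose (j+1))
    = (2*(m:ℚ)+3) * (((m+1).choose (j+1)) * ((m+2+j).choose (j+1))
        + 2 * (((m+1).choose j) * ((m+1+j).choose j))) := by
  rcases lt_or_ge m (j+1) with h | h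
  · -- j+1 > m : subcases j = m, j = m+1, j ≥ m+2
    rcases (by omega : j = m ∨ j = m + 1 ∨ m + 2 ≤ j) with rfl | rfl | hj
    · -- j = j : i = j+1
      rw [Nat.choose_eq_zero_of_lt (by omega : j < j+1)]
      have c1 : ((j+2).choose (j+1) : ℚ) = (j+2) := by
        rw [Nat.choose_succ_self_right]; push_cast; ring
      have c2 : (((j+1)).choose (j+1) : ℚ) = 1 := by simp
      have c3 : (((j+1)).choose j : ℚ) = (j+1) := by
        rw [Nat.choose_succ_self_right]; push_cast; ring
      have c4 : ((j+3+j).choose (j+1) : ℚ) = (j+3+j)! / ((j+1)! * ((j+2)!)) := by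
        rw [Nat.cast_choose ℚ (by omega)]
        rw [show j+3+j - (j+1) = j+2 from by omega]
      have c5 : ((j+2+j).choose (j+1) : ℚ) = (j+2+j)! / ((j+1)! * ((j+1)!)) := by
        rw [Nat.cast_choose ℚ (by omega)]
        rw [show j+2+j - (j+1) = j+1 from by omega]
      have c6 : ((j+1+j).choose j : ℚ) = (j+1+j)! / (j ! * ((j+1)!)) := by
        rw [Nat.cast_choose ℚ (by omega)]
        rw [show j+1+j - j = j+1 from by omega]
      rw [c1, c2, c3, c4, c5, c6]
      have e1 : ((j+3+j)! : ℚ) = (2*j+3) * (2*j+2) * (j+1+j)! := by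
        rw [show j+3+j = (j+1+j) + 1 + 1 from by omega]
        push_cast [Nat.factorial_succ]; ring
      have e2 : ((j+2+j)! : ℚ) = (2*j+2) * (j+1+j)! := by
        rw [show j+2+j = (j+1+j) + 1 from by omega]
        push_cast [Nat.factorial_succ]; ring
      have e3 : ((j+2)! : ℚ) = (j+2) * (j+1) * j ! := by
        push_cast [Nat.factorial_succ]; ring
      have e4 : ((j+1)! : ℚ) = (j+1) * j ! := by
        push_cast [Nat.factorial_succ]; ring
      rw [e1, e2, e3, e4]
      have n1 := delannoy_aux_fact_ne j
      have n2 := delannoy_aux_fact_ne (j+1+j)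
      have n3 : ((j:ℚ)+1) ≠ 0 := by positivity
      have n4 : ((j:ℚ)+2) ≠ 0 := by positivity
      field_simp
      ring
    · -- j = m+1 : i = m+2
      rw [Nat.choose_eq_zero_of_lt (by omega : m < m+1+1),
          Nat.choose_eq_zero_of_lt (by omega : m+1 < m+1+1)]
      have c1 : ((m+2).choose (m+1+1) : ℚ) = 1 := by
        rw [show m+1+1 = m+2 from by omega]; simp
      have c3 : (((m+1)).choose (m+1) : ℚ) = 1 := by simp
      have c4 : ((m+3+(m+1)).choose (m+1+1) : ℚ) = (m+3+(m+1))! / ((m+2)! * ((m+2)!)) := by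
        rw [Nat.cast_choose ℚ (by omega)]
        rw [show m+3+(m+1) - (m+1+1) = m+2 from by omega,
            show m+1+1 = m+2 from by omega]
      have c6 : ((m+1+(m+1)).choose (m+1) : ℚ) = (m+1+(m+1))! / ((m+1)! * ((m+1)!)) := by
        rw [Nat.cast_choose ℚ (by omega)]
        rw [show m+1+(m+1) - (m+1) = m+1 from by omega]
      rw [c1, c3, c4, c6]
      have e1 : ((m+3+(m+1))! : ℚ) = (2*m+4) * (2*m+3) * (m+1+(m+1))! := by
        rw [show m+3+(m+1) = (m+1+(m+1)) + 1 + 1 from by omega]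
        push_cast [Nat.factorial_succ]; ring
      have e3 : ((m+2)! : ℚ) = (m+2) * (m+1)! := by
        push_cast [Nat.factorial_succ]; ring
      rw [e1, e3]
      have n1 := delannoy_aux_fact_ne (m+1)
      have n2 := delannoy_aux_fact_ne (m+1+(m+1))
      have n4 : ((m:ℚ)+2) ≠ 0 := by positivity
      field_simp
      ring
    · -- j ≥ m+2 : everything vanishes
      rw [Nat.choose_eq_zero_of_lt (by omega : m+2 < j+1),
          Nat.choose_eq_zero_of_lt (by omega : m < j+1),
          Nat.choose_eq_zero_of_lt (by omega : m+1 < j+1),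
          Nat.choose_eq_zero_of_lt (by omega : m+1 < j)]
      push_cast; ring
  · -- generic case j+1 ≤ m
    obtain ⟨a, rfl⟩ : ∃ a, m = j+1+a := ⟨m - (j+1), by omega⟩
    set m := j+1+a with hm
    have c1 : ((m+2).choose (j+1) : ℚ) = (m+2)! / ((j+1)! * (a+2)!) := by
      rw [Nat.cast_choose ℚ (by omega), show m+2 - (j+1) = a+2 from by omega]
    have c2 : ((m+3+j).choose (j+1) : ℚ) = (m+3+j)! / ((j+1)! * (m+2)!) := by
      rw [Nat.cast_choose ℚ (by omega), show m+3+j - (j+1) = m+2 from by omega]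
    have c3 : (m.choose (j+1) : ℚ) = m ! / ((j+1)! * a !) := by
      rw [Nat.cast_choose ℚ (by omega), show m - (j+1) = a from by omega]
    have c4 : ((m+1+j).choose (j+1) : ℚ) = (m+1+j)! / ((j+1)! * m !) := by
      rw [Nat.cast_choose ℚ (by omega), show m+1+j - (j+1) = m from by omega]
    have c5 : (((m+1)).choose (j+1) : ℚ) = (m+1)! / ((j+1)! * (a+1)!) := by
      rw [Nat.cast_choose ℚ (by omega), show m+1 - (j+1) = a+1 from by omega]
    have c6 : ((m+2+j).choose (j+1) : ℚ) = (m+2+j)! / ((j+1)! * (m+1)!) := by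
      rw [Nat.cast_choose ℚ (by omega), show m+2+j - (j+1) = m+1 from by omega]
    have c7 : (((m+1)).choose j : ℚ) = (m+1)! / (j ! * (a+2)!) := by
      rw [Nat.cast_choose ℚ (by omega), show m+1 - j = a+2 from by omega]
    have c8 : ((m+1+j).choose j : ℚ) = (m+1+j)! / (j ! * ((m+1)!)) := by
      rw [Nat.cast_choose ℚ (by omega), show m+1+j - j = m+1 from by omega]
    rw [c1, c2, c3, c4, c5, c6, c7, c8]
    have e1 : ((m+3+j)! : ℚ) = ((m:ℚ)+3+j) * ((m:ℚ)+2+j) * (m+1+j)! := by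
      rw [show m+3+j = (m+1+j) + 1 + 1 from by omega]
      push_cast [Nat.factorial_succ]; ring
    have e2 : ((m+2+j)! : ℚ) = ((m:ℚ)+2+j) * (m+1+j)! := by
      rw [show m+2+j = (m+1+j) + 1 from by omega]
      push_cast [Nat.factorial_succ]; ring
    have e3 : ((m+2)! : ℚ) = ((m:ℚ)+2) * ((m:ℚ)+1) * m ! := by
      push_cast [Nat.factorial_succ]; ring
    have e4 : ((m+1)! : ℚ) = ((m:ℚ)+1) * m ! := by
      push_cast [Nat.factorial_succ]; ring
    have e5 : ((a+2)! : ℚ) = ((a:ℚ)+2) * ((a:ℚ)+1) * a ! := by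
      push_cast [Nat.factorial_succ]; ring
    have e6 : ((a+1)! : ℚ) = ((a:ℚ)+1) * a ! := by
      push_cast [Nat.factorial_succ]; ring
    have e7 : ((j+1)! : ℚ) = ((j:ℚ)+1) * j ! := by
      push_cast [Nat.factorial_succ]; ring
    rw [e1, e2, e3, e4, e5, e6, e7]
    have n1 := delannoy_aux_fact_ne m
    have n2 := delannoy_aux_fact_ne (m+1+j)
    have n3 := delannoy_aux_fact_ne a
    have n4 := delannoy_aux_fact_ne j
    have h1 : ((m:ℚ)+1) ≠ 0 := by positivity
    have h2 : ((m:ℚ)+2) ≠ 0 := by positivity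
    have h3 : ((a:ℚ)+1) ≠ 0 := by positivity
    have h4 : ((a:ℚ)+2) ≠ 0 := by positivity
    have h5 : ((j:ℚ)+1) ≠ 0 := by positivity
    have hma : (m:ℚ) = (j:ℚ) + 1 + (a:ℚ) := by rw [hm]; push_cast; ring
    field_simp
    rw [hma]
    ring

end

lemma coeffZ (m j : ℕ) :
    ((m:ℤ)+2) * ((m+2).choose (j+1)) * ((m+3+j).choose (j+1))
      + ((m:ℤ)+1) * (m.choose (j+1)) * ((m+1+j).choose (j+1))
    = (2*(m:ℤ)+3) * (((m+1).choose (j+1)) * ((m+2+j).choose (j+1))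
        + 2 * (((m+1).choose j) * ((m+1+j).choose j))) := by
  exact_mod_cast delannoy_coeffQ m j

lemma delannoy_rec (m : ℕ) (z : ℤ) :
    ((m:ℤ)+2) * delannoy (m+2) z + ((m:ℤ)+1) * delannoy m z
      = (2*(m:ℤ)+3) * (2*z+1) * delannoy (m+1) z := by
  have hD0 : delannoy m z
      = ∑ i ∈ Finset.range (m+3), (m.choose i : ℤ) * ((m+i).choose i : ℤ) * z^i := by
    rw [delannoy]
    apply Finset.sum_subset (Finset.range_subset_range.mpr (by omega))
    intro i _ hi
    rw [Finset.mem_range, not_lt] at hi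
    rw [Nat.choose_eq_zero_of_lt (by omega)]
    push_cast; ring
  have hD1 : delannoy (m+1) z
      = ∑ i ∈ Finset.range (m+3), ((m+1).choose i : ℤ) * ((m+1+i).choose i : ℤ) * z^i := by
    rw [delannoy]
    apply Finset.sum_subset (Finset.range_subset_range.mpr (by omega))
    intro i _ hi
    rw [Finset.mem_range, not_lt] at hi
    rw [Nat.choose_eq_zero_of_lt (by omega)]
    push_cast; ring
  have hD2 : delannoy (m+2) z
      = ∑ i ∈ Finset.range (m+3), ((m+2).choose i : ℤ) * ((m+2+i).choose i : ℤ) * z^i := rfl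
  have hz : z * delannoy (m+1) z
      = ∑ i ∈ Finset.range (m+3),
          (if i = 0 then 0 else ((m+1).choose (i-1) : ℤ) * ((m+i).choose (i-1) : ℤ)) * z^i := by
    rw [Finset.sum_range_succ']
    simp only [Nat.succ_ne_zero, Nat.add_sub_cancel, reduceIte, zero_mul, add_zero]
    rw [delannoy, Finset.mul_sum]
    apply Finset.sum_congr rfl
    intro i _
    rw [show m + (i+1) = m + 1 + i from by omega]
    ring
  have key : (2*(m:ℤ)+3) * (2*z+1) * delannoy (m+1) z
      = (2*(m:ℤ)+3) * (delannoy (m+1) z + 2 * (z * delannoy (m+1) z)) := by ring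
  rw [key, hz, hD0, hD1, hD2]
  simp only [Finset.mul_sum, ← Finset.sum_add_distrib]
  apply Finset.sum_congr rfl
  intro i _
  rcases i with _ | j
  · simp
    ring
  · simp only [Nat.succ_ne_zero, Nat.add_sub_cancel, reduceIte]
    rw [show m + 2 + (j+1) = m + 3 + j from by omega,
        show m + (j+1) = m + 1 + j from by omega,
        show m + 1 + (j+1) = m + 2 + j from by omega]
    linear_combination z^(j+1) * coeffZ m j

theorem delannoy_telescoped_sum (z : ℤ) (x : Polynomial ℚ) (n : ℕ) (hn : 1 ≤ n) :
    ∑ k ∈ Finset.range n,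
      ((k : ℚ) * x.eval ((k : ℚ) - 2)
        - (2 * (k : ℚ) + 1) * (2 * (z : ℚ) + 1) * x.eval ((k : ℚ) - 1)
        + ((k : ℚ) + 1) * x.eval (k : ℚ)) * (delannoy k z : ℚ)
      = (n : ℚ) *
          (x.eval ((n : ℚ) - 1) * (delannoy (n - 1) z : ℚ)
            - x.eval ((n : ℚ) - 2) * (delannoy n z : ℚ)) := by
  induction n, hn using Nat.le_induction with
  | base =>
    have d0 : delannoy 0 z = 1 := by simp [delannoy]
    have d1 : delannoy 1 z = 2*z + 1 := by
      simp [delannoy, Finset.sum_range_succ]; ring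
    rw [Finset.sum_range_one]
    norm_num [d0, d1]
    ring
  | succ n hn ih =>
    obtain ⟨m, rfl⟩ : ∃ m, n = m + 1 := ⟨n-1, by omega⟩
    rw [Finset.sum_range_succ, ih]
    have hrecQ : ((m:ℚ)+2) * (delannoy (m+2) z : ℚ) + ((m:ℚ)+1) * (delannoy m z : ℚ)
        = (2*(m:ℚ)+3) * (2*(z:ℚ)+1) * (delannoy (m+1) z : ℚ) := by
      exact_mod_cast delannoy_rec m z
    simp only [Nat.add_sub_cancel]
    push_cast
    rw [show (m:ℚ)+1+1-1 = (m:ℚ)+1 from by ring,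
        show (m:ℚ)+1+1-2 = (m:ℚ)+1-1 from by ring]
    linear_combination x.eval ((m:ℚ)+1-1) * hrecQ
end

section
/- For every s ∈ ℕ there exist integers e_1, e_2, …, e_{⌊(s+1)/2⌋} (not depending on z) such that for every z the polynomial identity 2 k (2k−1)^s − 2(2k+1)(2z+1)(2k+1)^s + 2(k+1)(2k+3)^s = −4z (2k+1)^{s+1} + ∑_{j=1}^{⌊(s+1)/2⌋} e_j (2k+1)^{s+1−2j} holds in ℤ[k] (equivalently, in ℤ[z][k]). -/
open Finset Polynomial

noncomputable def Pp (s : ℕ) : Polynomial ℤ :=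
  (X + 1) * (X + C 2) ^ s + (X + C (-1)) * (X + C (-2)) ^ s - 2 * X ^ (s + 1)

lemma Pp_coeff (s m : ℕ) :
    (Pp s).coeff m =
      (if m = 0 then 0 else ((2:ℤ) ^ (s - (m-1)) + (-2:ℤ) ^ (s - (m-1))) * (s.choose (m-1)))
      + ((2:ℤ) ^ (s - m) - (-2:ℤ) ^ (s - m)) * (s.choose m)
      - (if m = s + 1 then 2 else 0) := by
  have h2 : Pp s =
      X * (X + C 2) ^ s + (X + C 2) ^ s
      + (X * (X + C (-2)) ^ s + C (-1) * (X + C (-2)) ^ s)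
      - C 2 * X ^ (s+1) := by
    unfold Pp
    rw [map_ofNat]
    ring
  rw [h2]
  simp only [coeff_add, coeff_sub]
  rw [coeff_C_mul, coeff_C_mul, coeff_X_add_C_pow, coeff_X_add_C_pow]
  rcases m with _ | k
  · rw [mul_coeff_zero, mul_coeff_zero, coeff_X_zero, coeff_X_pow]
    rw [if_neg (show ¬((0:ℕ) = s + 1) by omega), if_neg (show ¬((0:ℕ) = s + 1) by omega),
      if_pos rfl]
    ring
  · rw [coeff_X_mul, coeff_X_mul, coeff_X_add_C_pow, coeff_X_add_C_pow, coeff_X_pow]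
    simp only [Nat.add_sub_cancel, if_neg (Nat.succ_ne_zero k)]
    split <;> ring

lemma Pp_coeff_zero (s m : ℕ) (h : (m ≤ s ∧ m % 2 = s % 2) ∨ s + 1 ≤ m) :
    (Pp s).coeff m = 0 := by
  rw [Pp_coeff]
  rcases h with ⟨hle, hpar⟩ | hge
  · have he : Even (s - m) := by rw [Nat.even_iff]; omega
    have h1 : ((2:ℤ) ^ (s - m) - (-2:ℤ) ^ (s - m)) = 0 := by
      rw [he.neg_pow]; ring
    rcases Nat.eq_zero_or_pos m with rfl | hm
    · rw [if_pos rfl, h1, if_neg (show ¬(0 = s + 1) by omega)]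
      ring
    · have ho : Odd (s - (m-1)) := by rw [Nat.odd_iff]; omega
      have h2 : ((2:ℤ) ^ (s - (m-1)) + (-2:ℤ) ^ (s - (m-1))) = 0 := by
        rw [ho.neg_pow]; ring
      rw [if_neg (show ¬(m = 0) by omega), h1, h2, if_neg (show ¬(m = s + 1) by omega)]
      ring
  · rcases Nat.lt_or_ge (s+1) m with hgt | heq
    · have c1 : s.choose (m-1) = 0 := Nat.choose_eq_zero_of_lt (by omega)
      have c2 : s.choose m = 0 := Nat.choose_eq_zero_of_lt (by omega)
      rw [c1, c2, if_neg (show m ≠ s + 1 by omega)]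
      simp
    · have hm : m = s + 1 := by omega
      subst hm
      rw [if_neg (show ¬(s + 1 = 0) by omega), if_pos rfl, Nat.add_sub_cancel,
        Nat.sub_self, Nat.choose_self, Nat.choose_eq_zero_of_lt (by omega)]
      simp

lemma Pp_eq (s : ℕ) : ∃ e : ℕ → ℤ,
    Pp s = ∑ j ∈ Finset.Icc 1 ((s + 1) / 2), C (e j) * X ^ (s + 1 - 2 * j) := by
  refine ⟨fun j => (Pp s).coeff (s + 1 - 2 * j), ?_⟩
  ext m
  rw [finset_sum_coeff]
  simp only [coeff_C_mul, coeff_X_pow, mul_ite, mul_one, mul_zero]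
  by_cases hc : m < s ∧ m % 2 ≠ s % 2
  · obtain ⟨hms, hpar⟩ := hc
    rw [Finset.sum_eq_single ((s + 1 - m) / 2)]
    · rw [if_pos (by omega), show s + 1 - 2 * ((s + 1 - m) / 2) = m by omega]
    · intro j hj hne
      rw [Finset.mem_Icc] at hj
      rw [if_neg (by omega)]
    · intro hj0m
      exfalso
      rw [Finset.mem_Icc] at hj0m
      omega
  · rw [Finset.sum_eq_zero, Pp_coeff_zero s m (by omega)]
    intro j hj
    rw [Finset.mem_Icc] at hj
    rw [if_neg (by omega)]

theorem delannoy_adjoint_structure (s : ℕ) :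
    ∃ e : ℕ → ℤ, ∀ z : ℤ,
      2 * Polynomial.X * (2 * Polynomial.X - 1) ^ s
        - 2 * (2 * Polynomial.X + 1) * Polynomial.C (2 * z + 1) * (2 * Polynomial.X + 1) ^ s
        + 2 * (Polynomial.X + 1) * (2 * Polynomial.X + 3) ^ s
      = Polynomial.C (-4 * z) * (2 * Polynomial.X + 1) ^ (s + 1)
        + ∑ j ∈ Finset.Icc 1 ((s + 1) / 2),
            Polynomial.C (e j) * ((2 : Polynomial ℤ) * Polynomial.X + 1) ^ (s + 1 - 2 * j) := by
  obtain ⟨e, he⟩ := Pp_eq s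
  refine ⟨e, fun z => ?_⟩
  have h' := congrArg (Polynomial.aeval (2 * X + 1 : Polynomial ℤ)) he
  unfold Pp at h'
  simp only [map_add, map_sub, map_mul, map_pow, map_sum, map_one, map_ofNat,
    aeval_X, aeval_C, Int.reduceNeg, map_neg, Polynomial.algebraMap_eq] at h'
  simp only [map_add, map_mul, map_neg, map_one, map_ofNat]
  linear_combination h'
end

section
/- For every odd prime p, every r ∈ ℕ, and every z ∈ ℤ, one has ∑_{k=0}^{p−1} (2k+1)^{2r+1} D_k(z) ≡ 0 (mod p). -/
open Finset

lemma cast_descFact {R : Type*} [CommRing R] (a i : ℕ) :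
    (a.descFactorial i : R) = ∏ j ∈ range i, ((a : R) - j) := by
  induction i with
  | zero => simp
  | succ i ih =>
    rcases lt_or_ge a (i + 1) with h | h
    · rw [Nat.descFactorial_eq_zero_iff_lt.2 h, Nat.cast_zero]
      refine (Finset.prod_eq_zero (i := a) (mem_range.2 h) ?_).symm
      simp
    · rw [Nat.descFactorial_succ, Nat.cast_mul, ih, prod_range_succ, mul_comm]
      congr 1
      have : (i : ℕ) ≤ a := by omega
      push_cast [Nat.cast_sub this]
      ring

lemma key_s19 (p : ℕ) (hp : p.Prime) (k i : ℕ) (hk : k < p) (hi : i < p) :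
    (((p - 1 - k).choose i : ZMod p) * ((p - 1 - k + i).choose i : ZMod p))
      = (k.choose i : ZMod p) * ((k + i).choose i : ZMod p) := by
  haveI := Fact.mk hp
  have hfac : ((Nat.factorial i : ℕ) : ZMod p) ≠ 0 := by
    rw [Ne, ZMod.natCast_eq_zero_iff]
    intro h
    exact absurd (Nat.Prime.dvd_factorial hp |>.1 h) (by omega)
  apply mul_left_cancel₀ (mul_ne_zero hfac hfac)
  have e1 : ∀ m : ℕ, ((Nat.factorial i : ℕ) : ZMod p) * (m.choose i : ZMod p) = (m.descFactorial i : ZMod p) := by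
    intro m
    rw [← Nat.cast_mul, Nat.descFactorial_eq_factorial_mul_choose]
  calc ((Nat.factorial i : ℕ) : ZMod p) * ((Nat.factorial i : ℕ) : ZMod p) * (((p-1-k).choose i : ZMod p) * ((p-1-k+i).choose i : ZMod p))
      = (((Nat.factorial i):ZMod p) * ((p-1-k).choose i : ZMod p)) * (((Nat.factorial i):ZMod p) * ((p-1-k+i).choose i : ZMod p)) := by ring
    _ = ((p-1-k).descFactorial i : ZMod p) * ((p-1-k+i).descFactorial i : ZMod p) := by rw [e1, e1]
    _ = (k.descFactorial i : ZMod p) * ((k+i).descFactorial i : ZMod p) := by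
        rw [cast_descFact, cast_descFact, cast_descFact, cast_descFact]
        have hc : ((p - 1 - k : ℕ) : ZMod p) = -(k : ZMod p) - 1 := by
          have h1 : ((p - 1 - k : ℕ) + (k + 1) : ℕ) = p := by omega
          have := congrArg (Nat.cast : ℕ → ZMod p) h1
          push_cast at this
          rw [ZMod.natCast_self] at this
          linear_combination this
        have hc2 : ((p - 1 - k + i : ℕ) : ZMod p) = -(k : ZMod p) - 1 + i := by
          push_cast [hc]; ring
        rw [hc, hc2]
        push_cast
        -- LHS = ∏ (-(k+1)-j) * ∏ (-(k+1)+i-j), RHS = ∏ (k-j) * ∏ (k+i-j)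
        rw [← prod_range_reflect (fun j => ((k : ZMod p) + (i:ℕ) - j)) i,
            ← prod_range_reflect (fun j => ((k : ZMod p) - j)) i]
        rw [← prod_mul_distrib, ← prod_mul_distrib]
        apply Finset.prod_congr rfl
        intro j hj
        have hj' : j < i := mem_range.1 hj
        have hcastsub : ((i - 1 - j : ℕ) : ZMod p) = (i : ZMod p) - 1 - j := by
          have : (i - 1 - j : ℕ) + (1 + j) = i := by omega
          have := congrArg (Nat.cast : ℕ → ZMod p) this
          push_cast at this
          linear_combination this
        simp only [hcastsub]
        ring
    _ = ((Nat.factorial i):ZMod p) * ((Nat.factorial i):ZMod p) * ((k.choose i : ZMod p) * ((k+i).choose i : ZMod p)) := by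
        rw [← e1, ← e1]; ring

lemma cast_refl (p k : ℕ) (hk : k < p) : ((p - 1 - k : ℕ) : ZMod p) = -(k : ZMod p) - 1 := by
  have h1 : ((p - 1 - k : ℕ) + (k + 1) : ℕ) = p := by omega
  have h2 := congrArg (Nat.cast : ℕ → ZMod p) h1
  push_cast at h2
  rw [ZMod.natCast_self] at h2
  linear_combination h2

lemma delannoy_reflect (p : ℕ) (hp : p.Prime) (k : ℕ) (hk : k < p) (z : ℤ) :
    ((delannoy (p - 1 - k) z : ℤ) : ZMod p) = ((delannoy k z : ℤ) : ZMod p) := by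
  have ext : ∀ m : ℕ, m < p →
      ((delannoy m z : ℤ) : ZMod p)
        = ∑ i ∈ range p, (m.choose i : ZMod p) * ((m + i).choose i : ZMod p) * (z : ZMod p) ^ i := by
    intro m hm
    rw [delannoy]
    push_cast
    refine Finset.sum_subset (Finset.range_subset_range.2 (by omega)) ?_
    intro i _ hi
    rw [mem_range, not_lt] at hi
    rw [Nat.choose_eq_zero_of_lt (by omega)]
    simp
  rw [ext _ (by omega), ext _ hk]
  refine Finset.sum_congr rfl ?_
  intro i hi
  rw [key_s19 p hp k i hk (mem_range.1 hi)]

theorem delannoy_odd_power_congruence (p : ℕ) (hp : p.Prime) (hp2 : p ≠ 2)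
    (r : ℕ) (z : ℤ) :
    (∑ k ∈ Finset.range p, (2 * (k : ℤ) + 1) ^ (2 * r + 1) * delannoy k z)
      ≡ 0 [ZMOD (p : ℤ)] := by
  haveI := Fact.mk hp
  suffices h : ((∑ k ∈ Finset.range p, (2 * (k : ℤ) + 1) ^ (2 * r + 1) * delannoy k z : ℤ) : ZMod p) = 0 by
    exact Int.modEq_zero_iff_dvd.mpr ((ZMod.intCast_zmod_eq_zero_iff_dvd _ p).1 h)
  push_cast
  set S : ZMod p := ∑ k ∈ Finset.range p, (2 * (k : ZMod p) + 1) ^ (2 * r + 1) * ((delannoy k z : ℤ) : ZMod p) with hS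
  show S = 0
  have h2 : (2 : ZMod p) ≠ 0 := by
    rw [show (2 : ZMod p) = ((2 : ℕ) : ZMod p) by push_cast; rfl, Ne,
      ZMod.natCast_eq_zero_iff]
    intro h
    exact hp2 ((Nat.prime_dvd_prime_iff_eq hp Nat.prime_two).1 h)
  have hrefl := Finset.sum_range_reflect
    (fun k => (2 * (k : ZMod p) + 1) ^ (2 * r + 1) * ((delannoy k z : ℤ) : ZMod p)) p
  have hneg : (∑ k ∈ Finset.range p,
      (2 * ((p - 1 - k : ℕ) : ZMod p) + 1) ^ (2 * r + 1) * ((delannoy (p - 1 - k) z : ℤ) : ZMod p))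
      = -S := by
    rw [hS, ← Finset.sum_neg_distrib]
    refine Finset.sum_congr rfl ?_
    intro k hk
    have hk' : k < p := mem_range.1 hk
    rw [cast_refl p k hk', delannoy_reflect p hp k hk' z]
    have : (2 * (-(k : ZMod p) - 1) + 1) = -(2 * (k : ZMod p) + 1) := by ring
    rw [this, Odd.neg_pow ⟨r, by ring⟩]
    ring
  have hSS : S = -S := (hS.trans hrefl.symm).trans hneg
  have h2S : (2 : ZMod p) * S = 0 := by linear_combination hSS
  exact (mul_eq_zero.1 h2S).resolve_left h2
end
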